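/- arXiv:1911.10485 — 5 statements merged into one kernel-verified Lean document; each statement's English description precedes it below -/
import Mathlib

section
/- Let r ≥ 2 and let M = (S, I) be a k-colorable paving matroid of rank r whose bases are the r-element subsets of S not contained in any member of a family H = {H_1, …, H_q} of proper subsets of S with |H_i| ≥ r for all i and |H_i ∩ H_j| ≤ r−2 for i ≠ j, with |H_1| ≥ … ≥ |H_q|. If H is nonempty and |S|/r ≤ |H_1|/(r−1), then there exists a partition matroid N = (S, J) with N ⪯_r M and χ(N) = χ(M). -/
open Set

variable {α : Type*}

section Aux

lemma iUnion_fin_cases {n : ℕ} (A : Set α) (f : Fin n → Set α) :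
    (⋃ i, (Fin.cases A f : Fin (n+1) → Set α) i) = A ∪ ⋃ i, f i := by
  ext y
  simp only [mem_iUnion, mem_union]
  constructor
  · rintro ⟨i, hi⟩
    induction i using Fin.cases with
    | zero => exact Or.inl hi
    | succ j => exact Or.inr ⟨j, hi⟩
  · rintro (h | ⟨j, hj⟩)
    · exact ⟨0, h⟩
    · exact ⟨j.succ, hj⟩

lemma exists_partition (n cb : ℕ) {A : Set α} (hA : A.Finite) (hn : n ≤ A.ncard)
    (hub : A.ncard ≤ n * cb) :
    ∃ f : Fin n → Set α, (⋃ i, f i) = A ∧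
      (∀ i, (f i).Nonempty ∧ (f i).ncard ≤ cb ∧ f i ⊆ A) ∧
      ∀ i j, i ≠ j → Disjoint (f i) (f j) := by
  induction n generalizing A with
  | zero =>
    have : A = ∅ := (ncard_eq_zero hA).1 (by omega)
    exact ⟨Fin.elim0, by simp [this], fun i => i.elim0, fun i => i.elim0⟩
  | succ n ih =>
    have hcb : 1 ≤ cb := by
      rcases Nat.eq_zero_or_pos cb with h | h
      · subst h; simp at hub; omega
      · exact h
    have hbA : min cb (A.ncard - n) ≤ A.ncard := le_trans (min_le_right _ _) (by omega)
    obtain ⟨B, hBA, hBcard⟩ := Set.exists_subset_card_eq hbA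
    have hBfin : B.Finite := hA.subset hBA
    have hdiff : (A \ B).ncard = A.ncard - min cb (A.ncard - n) := by
      rw [ncard_diff hBA hBfin, hBcard]
    have hmul : (n+1) * cb = n * cb + cb := by ring
    have hnle : n ≤ n * cb := Nat.le_mul_of_pos_right n hcb
    have hn' : n ≤ (A \ B).ncard := by
      rw [hdiff]; have := min_le_right cb (A.ncard - n); omega
    have hub' : (A \ B).ncard ≤ n * cb := by
      rw [hdiff]
      rcases min_cases cb (A.ncard - n) with ⟨h1, h2⟩ | ⟨h1, h2⟩ <;> omega
    obtain ⟨g, hgU, hgprop, hgdisj⟩ := ih (hA.diff : (A \ B).Finite) hn' hub'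
    have hgsub : ∀ i, g i ⊆ A \ B := fun i => (hgprop i).2.2
    refine ⟨Fin.cases B g, ?_, ?_, ?_⟩
    · rw [iUnion_fin_cases, hgU, union_diff_cancel hBA]
    · intro i
      induction i using Fin.cases with
      | zero =>
        simp only [Fin.cases_zero]
        refine ⟨nonempty_of_ncard_ne_zero (by rw [hBcard]; omega), ?_, hBA⟩
        rw [hBcard]; exact min_le_left _ _
      | succ j =>
        exact ⟨(hgprop j).1, (hgprop j).2.1, (hgsub j).trans diff_subset⟩
    · intro i j hij
      induction i using Fin.cases with
      | zero =>
        induction j using Fin.cases with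
        | zero => exact absurd rfl hij
        | succ j' => exact disjoint_sdiff_right.mono_right (hgsub j')
      | succ i' =>
        induction j using Fin.cases with
        | zero => exact (disjoint_sdiff_right.mono_right (hgsub i')).symm
        | succ j' =>
          exact hgdisj i' j' (fun h => hij (by rw [h]))

lemma encard_le_of_cover {n m : ℕ} (F : Fin n → Set α) (X : Set α) (hX : X ⊆ ⋃ i, F i)
    (h1 : ∀ i, (X ∩ F i).encard ≤ m) : X.encard ≤ (n * m : ℕ) := by
  induction n generalizing X with
  | zero => simp only [iUnion_of_empty] at hX; simp [subset_empty_iff.1 hX]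
  | succ n ih =>
    have hXsplit : X = (X ∩ F 0) ∪ (X \ F 0) := (inter_union_diff X (F 0)).symm
    have hsub : X \ F 0 ⊆ ⋃ i : Fin n, F i.succ := by
      intro y hy
      obtain ⟨i, hi⟩ := mem_iUnion.1 (hX hy.1)
      induction i using Fin.cases with
      | zero => exact absurd hi hy.2
      | succ j => exact mem_iUnion.2 ⟨j, hi⟩
    have hrec : (X \ F 0).encard ≤ (n * m : ℕ) := by
      refine ih (fun i => F i.succ) _ hsub (fun i => ?_)
      exact le_trans (encard_mono (inter_subset_inter_left _ diff_subset)) (h1 i.succ)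
    calc X.encard ≤ (X ∩ F 0).encard + (X \ F 0).encard := by
          nth_rewrite 1 [hXsplit]; exact encard_union_le _ _
      _ ≤ (m : ℕ∞) + (n * m : ℕ) := add_le_add (h1 0) hrec
      _ = ((n+1) * m : ℕ) := by push_cast; ring

lemma exists_injOn_to_fin {s : Set α} (hs : s.Finite) {n : ℕ} (h : s.ncard ≤ n) (hn : 0 < n) :
    ∃ g : α → Fin n, InjOn g s := by
  haveI := hs.fintype
  have h1 : Fintype.card s = s.ncard := by
    rw [← Nat.card_coe_set_eq s, Nat.card_eq_fintype_card]
  have hcard : Fintype.card s ≤ Fintype.card (Fin n) := by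
    rw [h1, Fintype.card_fin]; exact h
  obtain ⟨e⟩ := Function.Embedding.nonempty_of_card_le hcard
  classical
  refine ⟨fun a => if ha : a ∈ s then e ⟨a, ha⟩ else ⟨0, hn⟩, ?_⟩
  intro a ha b hb hab
  simp only [dif_pos ha, dif_pos hb] at hab
  exact Subtype.ext_iff.1 (e.injective hab)

/-- The partition matroid determined by a partition `P` of a finite set `S`. -/
noncomputable def partitionMatroid (S : Set α) (hS : S.Finite) (P : Set (Set α))
    (hdisj : ∀ c ∈ P, ∀ c' ∈ P, c ≠ c' → Disjoint c c') : Matroid α :=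
  (IndepMatroid.ofFinite hS (fun X => X ⊆ S ∧ ∀ c ∈ P, (X ∩ c).encard ≤ 1)
    ⟨empty_subset _, fun c _ => by simp⟩
    (fun I J hJ hIJ => ⟨hIJ.trans hJ.1, fun c hc =>
      le_trans (encard_mono (inter_subset_inter_left _ hIJ)) (hJ.2 c hc)⟩)
    (by
      intro I J hI hJ hlt
      by_contra hcon
      push_neg at hcon
      have key : ∀ e ∈ J \ I, ∃ x c, c ∈ P ∧ e ∈ c ∧ x ∈ I ∩ c ∧ x ∉ J := by
        intro e he
        have h1 := hcon e he.1 he.2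
        have hsub : insert e I ⊆ S := insert_subset (hJ.1 he.1) hI.1
        have hex : ∃ c ∈ P, ¬ ((insert e I ∩ c).encard ≤ 1) := by
          by_contra h2; push_neg at h2; obtain ⟨c, hc, hlt⟩ := h1 hsub; exact absurd (h2 c hc) (not_le.2 hlt)
        obtain ⟨c, hc, hbig⟩ := hex
        rw [not_le] at hbig
        have hec : e ∈ c := by
          by_contra hec
          have heq : insert e I ∩ c = I ∩ c := by
            ext y; simp only [mem_inter_iff, mem_insert_iff]
            constructor
            · rintro ⟨(rfl | hy), hyc⟩
              · exact absurd hyc hec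
              · exact ⟨hy, hyc⟩
            · rintro ⟨hy, hyc⟩; exact ⟨Or.inr hy, hyc⟩
          rw [heq] at hbig
          exact (hbig.trans_le (hI.2 c hc)).false
        obtain ⟨x, hx, hxe⟩ := exists_ne_of_one_lt_encard hbig e
        have hxI : x ∈ I ∩ c := by
          obtain ⟨hx1, hx2⟩ := hx
          rcases hx1 with rfl | hx1
          · exact absurd rfl hxe
          · exact ⟨hx1, hx2⟩
        refine ⟨x, c, hc, hec, hxI, fun hxJ => ?_⟩
        have hpair : ({e, x} : Set α) ⊆ J ∩ c := by
          rintro y (rfl | rfl)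
          · exact ⟨he.1, hec⟩
          · exact ⟨hxJ, hxI.2⟩
        have h2 := (encard_pair (Ne.symm hxe)) ▸ encard_mono hpair
        have h3 := h2.trans (hJ.2 c hc)
        norm_num at h3
      choose! x c hcP hec hxI hxJ using key
      have hmap : ∀ e ∈ J \ I, x e ∈ I \ J := fun e he => ⟨(hxI e he).1, hxJ e he⟩
      have hinj : InjOn x (J \ I) := by
        intro e he e' he' hxx
        have hcc : c e = c e' := by
          by_contra hne
          exact (hdisj _ (hcP e he) _ (hcP e' he') hne).ne_of_mem
            (hxI e he).2 (hxx ▸ (hxI e' he').2) rfl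
        have h1 : (J ∩ c e).encard ≤ 1 := hJ.2 _ (hcP e he)
        rw [encard_le_one_iff] at h1
        exact h1 e e' ⟨he.1, hec e he⟩ ⟨he'.1, hcc ▸ hec e' he'⟩
      have hcard : (J \ I).ncard ≤ (I \ J).ncard :=
        ncard_le_ncard_of_injOn x hmap hinj ((hS.subset hI.1).diff : (I \ J).Finite)
      have h1 : (J ∩ I).ncard + (J \ I).ncard = J.ncard :=
        ncard_inter_add_ncard_diff_eq_ncard J I (hS.subset hJ.1)
      have h2 : (I ∩ J).ncard + (I \ J).ncard = I.ncard :=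
        ncard_inter_add_ncard_diff_eq_ncard I J (hS.subset hI.1)
      rw [inter_comm] at h1
      omega)
    (fun I hI => hI.1)).matroid

@[simp] theorem partitionMatroid_E (S : Set α) (hS : S.Finite) (P : Set (Set α)) (hdisj) :
    (partitionMatroid S hS P hdisj).E = S := rfl

theorem partitionMatroid_indep_iff (S : Set α) (hS : S.Finite) (P : Set (Set α)) (hdisj)
    {X : Set α} :
    (partitionMatroid S hS P hdisj).Indep X ↔ X ⊆ S ∧ ∀ c ∈ P, (X ∩ c).encard ≤ 1 := Iff.rfl

end Aux

/-- The ground set of the matroid `M` can be partitioned into `k` independent sets. -/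
def Matroid.IsColorable (M : Matroid α) (k : ℕ) : Prop :=
  ∃ I : Fin k → Set α, (∀ i, M.Indep (I i)) ∧ (⋃ i, I i) = M.E ∧
    Pairwise fun i j => Disjoint (I i) (I j)

/-- The coloring number of the matroid `M`: the minimum number of independent sets into
which the ground set can be partitioned. -/
noncomputable def Matroid.chi (M : Matroid α) : ℕ := sInf {k | M.IsColorable k}

/-- The (extended, cardinality-valued) rank of the matroid `M`. -/
noncomputable def Matroid.rkE (M : Matroid α) : ℕ∞ := ⨆ I ∈ {I | M.Indep I}, I.encard

/-- `N` is the partition matroid determined by the partition `P` of its ground set: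
a set is independent iff it meets every class of `P` in at most one element. -/
def Matroid.IsPartitionMatroid (N : Matroid α) (P : Set (Set α)) : Prop :=
  ⋃₀ P = N.E ∧ (∀ c ∈ P, ∀ c' ∈ P, c ≠ c' → Disjoint c c') ∧
    ∀ X, N.Indep X ↔ X ⊆ N.E ∧ ∀ c ∈ P, (X ∩ c).encard ≤ 1

/-- `N` is a reduction of `M` (written `N ⪯ M`): every `N`-independent set is
`M`-independent. -/
def Matroid.Reduction (N M : Matroid α) : Prop :=
  N.E = M.E ∧ ∀ I, N.Indep I → M.Indep I

/-- `M` is a paving matroid of rank `r`: it has rank `r` and every subset of the ground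
set of size at most `r - 1` is independent. -/
def Matroid.IsPavingOfRank (M : Matroid α) (r : ℕ) : Prop :=
  M.rkE = (r : ℕ∞) ∧ ∀ X ⊆ M.E, X.encard ≤ ((r - 1 : ℕ) : ℕ∞) → M.Indep X

/-- A cut (cocircuit) of the matroid `M`: an inclusionwise minimal subset of the ground
set intersecting every basis. -/
def Matroid.IsCut (M : Matroid α) (X : Set α) : Prop :=
  X ⊆ M.E ∧ (∀ B, M.IsBase B → (X ∩ B).Nonempty) ∧
    ∀ Y, Y ⊂ X → ∃ B, M.IsBase B ∧ Y ∩ B = ∅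

/-- If a `k`-colorable paving matroid `M` of rank `r ≥ 2` is defined by a nonempty family
`𝓗` with largest member `H₁` satisfying `|S|/r ≤ |H₁|/(r-1)`, then `M` admits a rank
preserving reduction to a partition matroid `N` with `χ(N) = χ(M)`. -/
theorem statement_12 (S : Set α) (hfin : S.Finite) (r k : ℕ) (hr : 2 ≤ r)
    (hSr : (r : ℕ∞) ≤ S.encard) (𝓗 : Set (Set α))
    (h𝓗 : ∀ H ∈ 𝓗, H ⊂ S ∧ (r : ℕ∞) ≤ H.encard)
    (h𝓗' : ∀ H₁ ∈ 𝓗, ∀ H₂ ∈ 𝓗, H₁ ≠ H₂ → (H₁ ∩ H₂).encard ≤ ((r - 2 : ℕ) : ℕ∞))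
    (M : Matroid α) (hE : M.E = S) (hpav : M.IsPavingOfRank r)
    (hBase : ∀ B, M.IsBase B ↔ B ⊆ S ∧ B.encard = (r : ℕ∞) ∧ ∀ H ∈ 𝓗, ¬B ⊆ H)
    (hcol : M.IsColorable k)
    (H₁ : Set α) (hH₁ : H₁ ∈ 𝓗) (hmax : ∀ H ∈ 𝓗, H.ncard ≤ H₁.ncard)
    (hcase : (r - 1) * S.ncard ≤ r * H₁.ncard) :
    ∃ (N : Matroid α) (P : Set (Set α)), N.IsPartitionMatroid P ∧ N.Reduction M ∧
      N.rkE = M.rkE ∧ N.chi = M.chi := by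
  classical
  obtain ⟨r', rfl⟩ : ∃ r', r = r' + 1 := ⟨r - 1, by omega⟩
  have hr' : 1 ≤ r' := by omega
  obtain ⟨hrk, hpaving⟩ := hpav
  have hH₁S : H₁ ⊂ S := (h𝓗 H₁ hH₁).1
  have hH₁fin : H₁.Finite := hfin.subset hH₁S.subset
  -- every independent set has at most r elements
  have hindep_le : ∀ X, M.Indep X → X.encard ≤ ((r' + 1 : ℕ) : ℕ∞) := by
    intro X hX
    have h : X.encard ≤ M.rkE :=
      le_biSup (fun I => I.encard) (show X ∈ {I | M.Indep I} from hX)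
    exact h.trans hrk.le
  -- an independent set of size r is a base
  have hbase_of : ∀ X, M.Indep X → X.encard = ((r' + 1 : ℕ) : ℕ∞) → M.IsBase X := by
    intro X hX hXr
    obtain ⟨B, hB, hXB⟩ := hX.exists_isBase_superset
    have hXfin : X.Finite := hfin.subset (hE ▸ hX.subset_ground)
    have : X = B := Finite.eq_of_subset_of_encard_le hXfin hXB
      ((hindep_le B hB.indep).trans_eq hXr.symm)
    rwa [this]
  -- independent sets meet H₁ in at most r-1 elements
  have hH1_le : ∀ X, M.Indep X → (X ∩ H₁).encard ≤ (r' : ℕ∞) := by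
    intro X hX
    by_contra hgt
    rw [not_le] at hgt
    have hXH : M.Indep (X ∩ H₁) := hX.subset inter_subset_left
    have h2 : ((r' + 1 : ℕ) : ℕ∞) ≤ (X ∩ H₁).encard := by
      have h3 := Order.add_one_le_of_lt hgt
      rwa [← Nat.cast_one, ← Nat.cast_add] at h3
    have hEq : (X ∩ H₁).encard = ((r' + 1 : ℕ) : ℕ∞) :=
      le_antisymm (hindep_le _ hXH) h2
    exact ((hBase _).1 (hbase_of _ hXH hEq)).2.2 H₁ hH₁ inter_subset_right
  -- optimal coloring of M
  have hchine : Set.Nonempty {k' | M.IsColorable k'} := ⟨k, hcol⟩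
  have hchi_mem : M.IsColorable M.chi := Nat.sInf_mem hchine
  obtain ⟨CI, hCIind, hCIcov, hCIdisj⟩ := hchi_mem
  have hCIcovS : ⋃ i, CI i = S := by rw [hCIcov, hE]
  -- counting bounds
  have hH1count : H₁.encard ≤ (M.chi * r' : ℕ) := by
    refine encard_le_of_cover CI H₁ (by rw [hCIcovS]; exact hH₁S.subset) (fun i => ?_)
    rw [inter_comm]
    exact hH1_le _ (hCIind i)
  have hScount : S.encard ≤ (M.chi * (r' + 1) : ℕ) := by
    refine encard_le_of_cover CI S (by rw [hCIcovS]) (fun i => ?_)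
    exact le_trans (encard_mono inter_subset_right) (hindep_le _ (hCIind i))
  have hH1n : H₁.ncard ≤ M.chi * r' := by
    rwa [← hH₁fin.cast_ncard_eq, Nat.cast_le] at hH1count
  have hSn : S.ncard ≤ M.chi * (r' + 1) := by
    rwa [← hfin.cast_ncard_eq, Nat.cast_le] at hScount
  have hBge : r' + 1 ≤ H₁.ncard := by
    have h := (h𝓗 H₁ hH₁).2
    rwa [← hH₁fin.cast_ncard_eq, Nat.cast_le] at h
  have hchipos : 0 < M.chi := by
    rcases Nat.eq_zero_or_pos M.chi with h | h
    · rw [h] at hH1n; omega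
    · exact h
  -- |S \ H₁| ≤ chi
  have hdiffc : S.ncard - H₁.ncard ≤ M.chi := by
    by_contra hcon
    push_neg at hcon
    have hBA : H₁.ncard ≤ S.ncard := ncard_le_ncard hH₁S.subset hfin
    have h1 : H₁.ncard + M.chi + 1 ≤ S.ncard := by omega
    have h2 : (r' + 1) * (H₁.ncard + M.chi + 1) ≤ (r' + 1) * S.ncard :=
      Nat.mul_le_mul_left _ h1
    have hcase' : r' * S.ncard ≤ (r' + 1) * H₁.ncard := by simpa using hcase
    have e1 : (r' + 1) * (H₁.ncard + M.chi + 1)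
        = (r' + 1) * H₁.ncard + (r' + 1) * M.chi + (r' + 1) := by ring
    have e2 : (r' + 1) * S.ncard = r' * S.ncard + S.ncard := by ring
    have e3 : M.chi * (r' + 1) = (r' + 1) * M.chi := by ring
    rw [e1, e2] at h2
    rw [e3] at hSn
    linarith
  -- partition H₁ into r' classes
  obtain ⟨f, hfU, hfprop, hfdisj⟩ := exists_partition r' M.chi hH₁fin (by omega)
    (by rw [Nat.mul_comm]; exact hH1n)
  set F : Fin (r' + 1) → Set α := Fin.cases (S \ H₁) f with hFdef
  have hF0 : F 0 = S \ H₁ := rfl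
  have hFs : ∀ i : Fin r', F i.succ = f i := fun i => rfl
  have hFsub : ∀ i, F i ⊆ S := by
    intro i
    induction i using Fin.cases with
    | zero => exact diff_subset
    | succ j => exact ((hfprop j).2.2).trans hH₁S.subset
  have hFne : ∀ i, (F i).Nonempty := by
    intro i
    induction i using Fin.cases with
    | zero => exact diff_nonempty.2 hH₁S.not_subset
    | succ j => exact (hfprop j).1
  have hFdisj : ∀ i j, i ≠ j → Disjoint (F i) (F j) := by
    intro i j hij
    induction i using Fin.cases with
    | zero =>
      induction j using Fin.cases with
      | zero => exact absurd rfl hij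
      | succ j' => exact disjoint_sdiff_left.mono_right (hfprop j').2.2
    | succ i' =>
      induction j using Fin.cases with
      | zero => exact (disjoint_sdiff_left.mono_right (hfprop i').2.2).symm
      | succ j' => exact hfdisj i' j' (fun h => hij (by rw [h]))
  have hFcard : ∀ i, (F i).ncard ≤ M.chi := by
    intro i
    induction i using Fin.cases with
    | zero =>
      rw [hF0, ncard_diff hH₁S.subset hH₁fin]
      exact hdiffc
    | succ j => exact (hfprop j).2.1
  have hFcover : ⋃ i, F i = S := by
    rw [hFdef, iUnion_fin_cases, hfU, diff_union_of_subset hH₁S.subset]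
  set P : Set (Set α) := Set.range F with hPdef
  have hPdisj : ∀ c ∈ P, ∀ c' ∈ P, c ≠ c' → Disjoint c c' := by
    rintro _ ⟨i, rfl⟩ _ ⟨j, rfl⟩ hne
    exact hFdisj i j (fun h => hne (by rw [h]))
  set N : Matroid α := partitionMatroid S hfin P hPdisj with hNdef
  have hNE : N.E = S := rfl
  have hNindep : ∀ X, N.Indep X ↔ X ⊆ S ∧ ∀ i, (X ∩ F i).encard ≤ 1 := by
    intro X
    rw [hNdef, partitionMatroid_indep_iff]
    constructor
    · rintro ⟨h1, h2⟩
      exact ⟨h1, fun i => h2 (F i) ⟨i, rfl⟩⟩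
    · rintro ⟨h1, h2⟩
      exact ⟨h1, by rintro _ ⟨i, rfl⟩; exact h2 i⟩
  -- reduction
  have hred : ∀ X, N.Indep X → M.Indep X := by
    intro X hX
    rw [hNindep] at hX
    obtain ⟨hXS, hX1⟩ := hX
    have hXr : X.encard ≤ ((r' + 1) * 1 : ℕ) :=
      encard_le_of_cover F X (hFcover ▸ hXS) hX1
    rw [Nat.mul_one] at hXr
    have hXfin : X.Finite := hfin.subset hXS
    rcases eq_or_lt_of_le hXr with heq | hlt
    · -- X is a base
      refine ((hBase X).2 ⟨hXS, heq, ?_⟩).indep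
      intro H hH hXH
      have hXH₁ : (X ∩ H₁).encard ≤ ((r' * 1 : ℕ) : ℕ∞) := by
        refine encard_le_of_cover f (X ∩ H₁) (by rw [hfU]; exact inter_subset_right)
          (fun i => ?_)
        refine le_trans (encard_mono ?_) (hX1 i.succ)
        rw [hFs]
        exact inter_subset_inter_left _ inter_subset_left
      rw [Nat.mul_one] at hXH₁
      by_cases hHH₁ : H = H₁
      · rw [hHH₁] at hXH
        have hXeq : X ∩ H₁ = X := inter_eq_self_of_subset_left hXH
        rw [hXeq, heq, Nat.cast_le] at hXH₁
        omega
      · have h2 : (X ∩ H₁).encard ≤ ((r' + 1 - 2 : ℕ) : ℕ∞) := by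
          refine le_trans (encard_mono ?_) (h𝓗' H hH H₁ hH₁ hHH₁)
          exact inter_subset_inter_left _ hXH
        have hX0 : (X ∩ (S \ H₁)).encard ≤ 1 := by
          have := hX1 0
          rwa [hF0] at this
        have hsplit : X = (X ∩ H₁) ∪ (X ∩ (S \ H₁)) := by
          ext y
          constructor
          · intro hy
            by_cases hyH : y ∈ H₁
            · exact Or.inl ⟨hy, hyH⟩
            · exact Or.inr ⟨hy, hXS hy, hyH⟩
          · rintro (h | h) <;> exact h.1
        have h3 : X.encard ≤ ((r' + 1 - 2 : ℕ) : ℕ∞) + 1 := by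
          calc X.encard = ((X ∩ H₁) ∪ (X ∩ (S \ H₁))).encard := by rw [← hsplit]
            _ ≤ (X ∩ H₁).encard + (X ∩ (S \ H₁)).encard := encard_union_le _ _
            _ ≤ ((r' + 1 - 2 : ℕ) : ℕ∞) + 1 := add_le_add h2 hX0
        rw [heq] at h3
        have h4 : (r' + 1 : ℕ) ≤ (r' + 1 - 2) + 1 := by exact_mod_cast h3
        omega
    · -- small: use pavingness
      have hn : X.ncard < r' + 1 := by
        rwa [← hXfin.cast_ncard_eq, Nat.cast_lt] at hlt
      refine hpaving X (by rw [hE]; exact hXS) ?_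
      rw [← hXfin.cast_ncard_eq, Nat.cast_le]
      omega
  -- rank
  have hNrk : N.rkE = ((r' + 1 : ℕ) : ℕ∞) := by
    apply le_antisymm
    · exact iSup₂_le fun X hX => hindep_le X (hred X hX)
    · choose x hx using hFne
      have hxinj : Function.Injective x := by
        intro i j hij
        by_contra hne
        exact (hFdisj i j hne).ne_of_mem (hx i) (hij ▸ hx j) rfl
      have hT : N.Indep (Set.range x) := by
        rw [hNindep]
        refine ⟨by rintro _ ⟨i, rfl⟩; exact hFsub i (hx i), fun i => ?_⟩
        rw [encard_le_one_iff]
        rintro a b ⟨ha1, ha2⟩ ⟨hb1, hb2⟩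
        obtain ⟨ia, rfl⟩ := ha1
        obtain ⟨ib, rfl⟩ := hb1
        have hia : ia = i := by
          by_contra hne
          exact (hFdisj ia i hne).ne_of_mem (hx ia) ha2 rfl
        have hib : ib = i := by
          by_contra hne
          exact (hFdisj ib i hne).ne_of_mem (hx ib) hb2 rfl
        rw [hia, hib]
      have hTcard : (Set.range x).encard = ((r' + 1 : ℕ) : ℕ∞) := by
        rw [← image_univ, hxinj.encard_image univ, encard_univ]
        simp
      calc ((r' + 1 : ℕ) : ℕ∞) = (Set.range x).encard := hTcard.symm
        _ ≤ N.rkE := le_biSup (fun I => I.encard) (show Set.range x ∈ {I | N.Indep I} from hT)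
  -- coloring of N with chi M colors
  obtain ⟨gcol, hgcol⟩ : ∃ g : Fin (r' + 1) → α → Fin M.chi, ∀ i, InjOn (g i) (F i) := by
    have h : ∀ i : Fin (r' + 1), ∃ g : α → Fin M.chi, InjOn g (F i) := fun i =>
      exists_injOn_to_fin (hfin.subset (hFsub i)) (hFcard i) hchipos
    exact ⟨fun i => (h i).choose, fun i => (h i).choose_spec⟩
  have hidx : ∀ y ∈ S, ∃ i, y ∈ F i := by
    intro y hy
    rwa [← hFcover, mem_iUnion] at hy
  set idx : α → Fin (r' + 1) := fun y => if h : ∃ i, y ∈ F i then h.choose else 0 with hidxdef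
  have hidxmem : ∀ y ∈ S, y ∈ F (idx y) := by
    intro y hy
    have h := hidx y hy
    simp only [hidxdef, dif_pos h]
    exact h.choose_spec
  have hidxuniq : ∀ (y : α) (i : Fin (r' + 1)), y ∈ F i → ∀ j, y ∈ F j → i = j := by
    intro y i hi j hj
    by_contra hne
    exact (hFdisj i j hne).ne_of_mem hi hj rfl
  set CJ : Fin M.chi → Set α := fun j => {y ∈ S | gcol (idx y) y = j} with hCJdef
  have hNcol : N.IsColorable M.chi := by
    refine ⟨CJ, fun j => ?_, ?_, ?_⟩
    · rw [hNindep]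
      refine ⟨fun y hy => hy.1, fun i => ?_⟩
      rw [encard_le_one_iff]
      rintro a b ⟨⟨haS, haj⟩, haF⟩ ⟨⟨hbS, hbj⟩, hbF⟩
      have hia : idx a = i := hidxuniq a _ (hidxmem a haS) i haF
      have hib : idx b = i := hidxuniq b _ (hidxmem b hbS) i hbF
      rw [hia] at haj
      rw [hib] at hbj
      exact hgcol i haF hbF (haj.trans hbj.symm)
    · apply subset_antisymm
      · rintro y hy
        obtain ⟨j, hyj⟩ := mem_iUnion.1 hy
        exact hyj.1
      · intro y hy
        exact mem_iUnion.2 ⟨gcol (idx y) y, hy, rfl⟩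
    · intro j j' hne
      rw [Set.disjoint_left]
      rintro a ⟨haS, haj⟩ ⟨_, haj'⟩
      exact hne (by rw [← haj, ← haj'])
  -- conclusion
  have hNchi_le : N.chi ≤ M.chi := Nat.sInf_le hNcol
  have hNne : Set.Nonempty {k' | N.IsColorable k'} := ⟨M.chi, hNcol⟩
  have hNmem : N.IsColorable N.chi := Nat.sInf_mem hNne
  have hMcol : M.IsColorable N.chi := by
    obtain ⟨I0, hI0ind, hI0cov, hI0disj⟩ := hNmem
    exact ⟨I0, fun i => hred _ (hI0ind i), by rw [hE, ← hNE]; exact hI0cov, hI0disj⟩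
  have hMchi_le : M.chi ≤ N.chi := Nat.sInf_le hMcol
  refine ⟨N, P, ⟨?_, hPdisj, ?_⟩, ⟨by rw [hE, ← hNE], hred⟩, by rw [hNrk, hrk],
    le_antisymm hNchi_le hMchi_le⟩
  · rw [hPdef, sUnion_range, hFcover, hNE]
  · intro X
    exact partitionMatroid_indep_iff S hfin P hPdisj
end

section
/- Consider any coloring of the points of a finite projective plane of order q with three colors such that every line contains at most 2 colors (no line contains points of all three colors). Then at least one of the following holds: (i) some color class is empty, (ii) some color class has exactly one point, or (iii) some color class equals the complement of a line. -/
open Set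

variable {α : Type*}

private lemma fin3_cases : ∀ i j k x : Fin 3, i ≠ j → i ≠ k → j ≠ k → x = i ∨ x = j ∨ x = k := by
  decide

/-- Auxiliary bundled structure for a finite linear space satisfying the needed axioms. -/
structure PPSetup (α : Type*) where
  S : Set α
  L : Set (Set α)
  q : ℕ
  c : α → Fin 3
  hfin : S.Finite
  hLS : ∀ ℓ ∈ L, ℓ ⊆ S
  hP1 : ∀ p ∈ S, ∀ p' ∈ S, p ≠ p' → ∃! ℓ, ℓ ∈ L ∧ p ∈ ℓ ∧ p' ∈ ℓ
  hP2 : ∀ ℓ ∈ L, ∀ ℓ' ∈ L, ℓ ≠ ℓ' → ∃! p, p ∈ ℓ ∩ ℓ'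
  horder : ∀ ℓ ∈ L, ℓ.encard = ((q + 1 : ℕ) : ℕ∞)
  hc : ∀ ℓ ∈ L, ∃ i : Fin 3, ∀ p ∈ ℓ, c p ≠ i

namespace PPSetup

variable {P : PPSetup α}

def K (P : PPSetup α) (i : Fin 3) : Set α := {p ∈ P.S | P.c p = i}

lemma mem_K {p : α} {i : Fin 3} : p ∈ P.K i ↔ p ∈ P.S ∧ P.c p = i := Iff.rfl

lemma K_sub {i : Fin 3} : P.K i ⊆ P.S := fun _ hp => hp.1

lemma L_finite (P : PPSetup α) : P.L.Finite :=
  P.hfin.finite_subsets.subset fun m hm => P.hLS m hm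

lemma line_finite {m : Set α} (hm : m ∈ P.L) : m.Finite :=
  P.hfin.subset (P.hLS m hm)

lemma line_ncard {m : Set α} (hm : m ∈ P.L) : m.ncard = P.q + 1 := by
  have h := P.horder m hm
  rw [Set.ncard, h]
  rfl

/-- two distinct common points force two lines to be equal -/
lemma line_unique {m m' : Set α} (hm : m ∈ P.L) (hm' : m' ∈ P.L) {p p' : α}
    (hp : p ∈ m) (hp' : p' ∈ m) (hq : p ∈ m') (hq' : p' ∈ m') (hne : p ≠ p') : m = m' := by
  have hpS : p ∈ P.S := P.hLS m hm hp
  have hp'S : p' ∈ P.S := P.hLS m hm hp'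
  have h := P.hP1 p hpS p' hp'S hne
  exact (h.unique ⟨hm, hp, hp'⟩ ⟨hm', hq, hq'⟩)

open Classical in
noncomputable def join (P : PPSetup α) (p p' : α) : Set α :=
  if h : p ∈ P.S ∧ p' ∈ P.S ∧ p ≠ p' then (P.hP1 p h.1 p' h.2.1 h.2.2).choose else ∅

lemma join_spec {p p' : α} (hp : p ∈ P.S) (hp' : p' ∈ P.S) (hne : p ≠ p') :
    P.join p p' ∈ P.L ∧ p ∈ P.join p p' ∧ p' ∈ P.join p p' := by
  rw [join, dif_pos ⟨hp, hp', hne⟩]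
  exact (P.hP1 p hp p' hp' hne).choose_spec.1

lemma join_eq {m : Set α} (hm : m ∈ P.L) {p p' : α} (hp : p ∈ m) (hp' : p' ∈ m)
    (hne : p ≠ p') : m = P.join p p' := by
  have hpS : p ∈ P.S := P.hLS m hm hp
  have hp'S : p' ∈ P.S := P.hLS m hm hp'
  obtain ⟨h1, h2, h3⟩ := join_spec hpS hp'S hne
  exact line_unique hm h1 hp hp' h2 h3 hne

open Classical in
noncomputable def meet [Nonempty α] (P : PPSetup α) (m m' : Set α) : α :=
  if h : ∃ p, p ∈ m ∩ m' then h.choose else Classical.arbitrary α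

lemma meet_spec [Nonempty α] {m m' : Set α} (hm : m ∈ P.L) (hm' : m' ∈ P.L) (hne : m ≠ m') :
    P.meet m m' ∈ m ∩ m' := by
  have h : ∃ p, p ∈ m ∩ m' := (P.hP2 m hm m' hm' hne).exists
  rw [meet, dif_pos h]
  exact h.choose_spec

lemma meet_unique [Nonempty α] {m m' : Set α} (hm : m ∈ P.L) (hm' : m' ∈ P.L) (hne : m ≠ m')
    {p : α} (hp : p ∈ m ∩ m') : p = P.meet m m' :=
  (P.hP2 m hm m' hm' hne).unique hp (meet_spec hm hm' hne)

/-- every line omits some colour, so a line with two colours has only those two colours -/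
lemma line_two_colors {m : Set α} (hm : m ∈ P.L) {p p' : α} (hp : p ∈ m) (hp' : p' ∈ m)
    (hne : P.c p ≠ P.c p') : ∀ t ∈ m, P.c t = P.c p ∨ P.c t = P.c p' := by
  intro t ht
  obtain ⟨w, hw⟩ := P.hc m hm
  have h1 : P.c p ≠ w := hw p hp
  have h2 : P.c p' ≠ w := hw p' hp'
  rcases fin3_cases (P.c p) (P.c p') w (P.c t) hne h1 h2 with h | h | h
  · exact Or.inl h
  · exact Or.inr h
  · exact absurd h (hw t ht)

end PPSetup

/-- counting a disjoint union of finitely many sets all of the same size -/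
private lemma uniform_count {α : Type*} {n : ℕ} {F : Set (Set α)} (hF : F.Finite)
    (hdis : ∀ s ∈ F, ∀ t ∈ F, s ≠ t → Disjoint s t)
    (hfins : ∀ s ∈ F, s.Finite) (hn : ∀ s ∈ F, s.ncard = n) :
    (⋃₀ F).ncard = F.ncard * n := by
  induction F, hF using Set.Finite.induction_on with
  | empty => simp
  | @insert a F haF hFfin ih =>
      have hdis' : ∀ s ∈ F, ∀ t ∈ F, s ≠ t → Disjoint s t :=
        fun s hs t ht => hdis s (Or.inr hs) t (Or.inr ht)
      have hfins' : ∀ s ∈ F, s.Finite := fun s hs => hfins s (Or.inr hs)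
      have hn' : ∀ s ∈ F, s.ncard = n := fun s hs => hn s (Or.inr hs)
      have hda : Disjoint a (⋃₀ F) := by
        rw [Set.disjoint_sUnion_right]
        intro t ht
        exact hdis a (Or.inl rfl) t (Or.inr ht) (fun h => haF (h ▸ ht))
      have hUfin : (⋃₀ F).Finite := Set.Finite.sUnion hFfin hfins'
      rw [Set.sUnion_insert, Set.ncard_union_eq hda (hfins a (Or.inl rfl)) hUfin,
        ih hdis' hfins' hn', Set.ncard_insert_of_notMem haF hFfin]
      rw [hn a (Or.inl rfl)]; ring

namespace PPSetup

variable {P : PPSetup α}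

/-- counting a set X covered by the pencil of lines through a point `w ∉ X`,
when all the lines of the pencil meeting `X` meet it in exactly `n` points -/
lemma countA {w : α} {X : Set α} (hw : w ∈ P.S) (hX : X ⊆ P.S) (hwX : w ∉ X) {n : ℕ}
    (hn : ∀ l ∈ P.L, w ∈ l → (l ∩ X).Nonempty → (l ∩ X).ncard = n) :
    X.ncard = {l | l ∈ P.L ∧ w ∈ l ∧ (l ∩ X).Nonempty}.ncard * n := by
  classical
  set F : Set (Set α) := {l | l ∈ P.L ∧ w ∈ l ∧ (l ∩ X).Nonempty} with hF
  have hFL : F ⊆ P.L := fun l hl => hl.1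
  have hFfin : F.Finite := P.L_finite.subset hFL
  -- the family of traces
  set G : Set (Set α) := (fun l => l ∩ X) '' F with hG
  have hXG : X = ⋃₀ G := by
    apply Set.Subset.antisymm
    · intro p hp
      have hpS : p ∈ P.S := hX hp
      have hpw : w ≠ p := fun h => hwX (h ▸ hp)
      obtain ⟨hL, hw1, hw2⟩ := join_spec hw hpS hpw
      exact ⟨P.join w p ∩ X, ⟨P.join w p, ⟨hL, hw1, ⟨p, hw2, hp⟩⟩, rfl⟩, hw2, hp⟩
    · rintro p ⟨t, ⟨l, _, rfl⟩, hpt⟩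
      exact hpt.2
  have hinj : Set.InjOn (fun l => l ∩ X) F := by
    rintro l1 hl1 l2 hl2 h
    by_contra hne
    obtain ⟨s, hs1, hs2⟩ := hl1.2.2
    have h' : l1 ∩ X = l2 ∩ X := h
    have hs1' : s ∈ l2 ∩ X := h' ▸ (⟨hs1, hs2⟩ : s ∈ l1 ∩ X)
    have hsw : s ≠ w := fun hh => hwX (hh ▸ hs2)
    exact hne (line_unique hl1.1 hl2.1 hs1 hl1.2.1 hs1'.1 hl2.2.1 hsw)
  have hGfin : G.Finite := hFfin.image _
  have hGdis : ∀ s ∈ G, ∀ t ∈ G, s ≠ t → Disjoint s t := by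
    rintro s ⟨l1, hl1, rfl⟩ t ⟨l2, hl2, rfl⟩ hst
    rw [Set.disjoint_left]
    rintro p ⟨hp1, hpX⟩ ⟨hp2, _⟩
    have hlne : l1 ≠ l2 := fun h => hst (by rw [h])
    have hpw : p ≠ w := fun hh => hwX (hh ▸ hpX)
    exact hlne (line_unique hl1.1 hl2.1 hp1 hl1.2.1 hp2 hl2.2.1 hpw)
  have hGfins : ∀ s ∈ G, s.Finite := by
    rintro s ⟨l, hl, rfl⟩
    exact (line_finite hl.1).subset Set.inter_subset_left
  have hGn : ∀ s ∈ G, s.ncard = n := by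
    rintro s ⟨l, hl, rfl⟩
    exact hn l hl.1 hl.2.1 hl.2.2
  rw [hXG, uniform_count hGfin hGdis hGfins hGn, Set.ncard_image_of_injOn hinj]

/-- the pencil of lines through `w` meeting `X` is in bijection with a subset `Y`
of a reference line `m` not through `w`. -/
lemma countB [Nonempty α] {w : α} {X : Set α} {m : Set α} (hw : w ∈ P.S) (hm : m ∈ P.L)
    (hwm : w ∉ m) {Y : Set α} (hY : Y ⊆ m)
    (H1 : ∀ l ∈ P.L, w ∈ l → (l ∩ X).Nonempty → P.meet l m ∈ Y)
    (H2 : ∀ s ∈ Y, (P.join w s ∩ X).Nonempty) :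
    {l | l ∈ P.L ∧ w ∈ l ∧ (l ∩ X).Nonempty}.ncard = Y.ncard := by
  classical
  set F : Set (Set α) := {l | l ∈ P.L ∧ w ∈ l ∧ (l ∩ X).Nonempty} with hF
  have hbij : Set.BijOn (fun l => P.meet l m) F Y := by
    refine ⟨fun l hl => H1 l hl.1 hl.2.1 hl.2.2, ?_, ?_⟩
    · intro l1 hl1 l2 hl2 heq
      have hne1 : l1 ≠ m := fun h => hwm (h ▸ hl1.2.1)
      have hne2 : l2 ≠ m := fun h => hwm (h ▸ hl2.2.1)
      have hs1 := meet_spec hl1.1 hm hne1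
      have hs2 := meet_spec hl2.1 hm hne2
      have heq' : P.meet l1 m = P.meet l2 m := heq
      rw [heq'] at hs1
      by_contra hll
      have hsw : P.meet l2 m ≠ w := fun h => hwm (h ▸ hs2.2)
      exact hll (line_unique hl1.1 hl2.1 hs1.1 hl1.2.1 hs2.1 hl2.2.1 hsw)
    · intro s hs
      have hsS : s ∈ P.S := P.hLS m hm (hY hs)
      have hsw : w ≠ s := fun h => hwm (h ▸ hY hs)
      obtain ⟨hjL, hj1, hj2⟩ := join_spec hw hsS hsw
      refine ⟨P.join w s, ⟨hjL, hj1, H2 s hs⟩, ?_⟩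
      have hne : P.join w s ≠ m := fun h => hwm (h ▸ hj1)
      exact (meet_unique hjL hm hne ⟨hj2, hY hs⟩).symm
  calc F.ncard = ((fun l => P.meet l m) '' F).ncard := (Set.ncard_image_of_injOn hbij.2.1).symm
    _ = Y.ncard := by rw [hbij.image_eq]

/-- uniformity: for a point `w` of colour `t1`, any two lines avoiding colour `t1`
have the same number of points of colour `t2`. -/
lemma unif [Nonempty α] {t1 t2 : Fin 3} (h12 : t1 ≠ t2) {w : α} (hw : w ∈ P.K t1)
    {m1 m2 : Set α} (hm1 : m1 ∈ P.L) (hm2 : m2 ∈ P.L)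
    (h1 : m1 ∩ P.K t1 = ∅) (h2 : m2 ∩ P.K t1 = ∅) :
    (m1 ∩ P.K t2).ncard = (m2 ∩ P.K t2).ncard := by
  classical
  rcases eq_or_ne m1 m2 with rfl | hmm
  · rfl
  have hwS : w ∈ P.S := hw.1
  have hwm1 : w ∉ m1 := fun h => (Set.eq_empty_iff_forall_notMem.1 h1) w ⟨h, hw⟩
  have hwm2 : w ∉ m2 := fun h => (Set.eq_empty_iff_forall_notMem.1 h2) w ⟨h, hw⟩
  -- generic step
  have key : ∀ (n1 n2 : Set α), n1 ∈ P.L → n2 ∈ P.L → n1 ∩ P.K t1 = ∅ → n2 ∩ P.K t1 = ∅ →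
      n1 ≠ n2 → ∀ s ∈ n1 ∩ P.K t2, P.meet (P.join w s) n2 ∈ n2 ∩ P.K t2 := by
    intro n1 n2 hn1 hn2 he1 he2 _ s hs
    have hsS : s ∈ P.S := P.hLS n1 hn1 hs.1
    have hws : w ≠ s := by
      intro h; exact (Set.eq_empty_iff_forall_notMem.1 he1) s ⟨hs.1, h ▸ hw⟩
    obtain ⟨hjL, hj1, hj2⟩ := join_spec hwS hsS hws
    have hwn2 : w ∉ n2 := fun h => (Set.eq_empty_iff_forall_notMem.1 he2) w ⟨h, hw⟩
    have hne : P.join w s ≠ n2 := fun h => hwn2 (h ▸ hj1)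
    have hmeet := meet_spec hjL hn2 hne
    set u := P.meet (P.join w s) n2 with hu
    have huS : u ∈ P.S := P.hLS n2 hn2 hmeet.2
    have hcs : P.c w ≠ P.c s := by rw [hw.2, hs.2.2]; exact h12
    have := line_two_colors hjL hj1 hj2 hcs u hmeet.1
    rw [hw.2, hs.2.2] at this
    rcases this with h | h
    · exact absurd ⟨hmeet.2, huS, h⟩ ((Set.eq_empty_iff_forall_notMem.1 he2) u)
    · exact ⟨hmeet.2, huS, h⟩
  have hbij : Set.BijOn (fun s => P.meet (P.join w s) m2) (m1 ∩ P.K t2) (m2 ∩ P.K t2) := by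
    refine ⟨key m1 m2 hm1 hm2 h1 h2 hmm, ?_, ?_⟩
    · intro s1 hs1 s2 hs2 heq
      by_contra hss
      have hs1S : s1 ∈ P.S := P.hLS m1 hm1 hs1.1
      have hs2S : s2 ∈ P.S := P.hLS m1 hm1 hs2.1
      have hws1 : w ≠ s1 := by
        intro h; exact (Set.eq_empty_iff_forall_notMem.1 h1) s1 ⟨hs1.1, h ▸ hw⟩
      have hws2 : w ≠ s2 := by
        intro h; exact (Set.eq_empty_iff_forall_notMem.1 h1) s2 ⟨hs2.1, h ▸ hw⟩
      obtain ⟨hj1L, hj11, hj12⟩ := join_spec hwS hs1S hws1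
      obtain ⟨hj2L, hj21, hj22⟩ := join_spec hwS hs2S hws2
      have hne1 : P.join w s1 ≠ m2 := fun h => hwm2 (h ▸ hj11)
      have hne2 : P.join w s2 ≠ m2 := fun h => hwm2 (h ▸ hj21)
      have hu1 := meet_spec hj1L hm2 hne1
      have hu2 := meet_spec hj2L hm2 hne2
      have heq' : P.meet (P.join w s1) m2 = P.meet (P.join w s2) m2 := heq
      rw [heq'] at hu1
      set u := P.meet (P.join w s2) m2 with hu
      have huw : u ≠ w := fun h => hwm2 (h ▸ hu2.2)
      -- u, w ∈ join w s1 ∩ join w s2 so the joins coincide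
      have hjj : P.join w s1 = P.join w s2 :=
        line_unique hj1L hj2L hu1.1 hj11 hu2.1 hj21 huw
      -- then s1, s2 ∈ join w s1 which also contains w; so that line is m1... contradiction
      have hs2j : s2 ∈ P.join w s1 := hjj ▸ hj22
      have : m1 = P.join w s1 := line_unique hm1 hj1L hs1.1 hs2.1 hj12 hs2j hss
      exact hwm1 (this ▸ hj11)
    · intro s hs
      refine ⟨P.meet (P.join w s) m1, key m2 m1 hm2 hm1 h2 h1 (Ne.symm hmm) s hs, ?_⟩
      set t := P.meet (P.join w s) m1 with ht
      have htm : t ∈ m1 ∩ P.K t2 := key m2 m1 hm2 hm1 h2 h1 (Ne.symm hmm) s hs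
      have hsS : s ∈ P.S := P.hLS m2 hm2 hs.1
      have hws : w ≠ s := by
        intro h; exact (Set.eq_empty_iff_forall_notMem.1 h2) s ⟨hs.1, h ▸ hw⟩
      obtain ⟨hjL, hj1, hj2⟩ := join_spec hwS hsS hws
      have hne : P.join w s ≠ m1 := fun h => hwm1 (h ▸ hj1)
      have htj : t ∈ P.join w s := (meet_spec hjL hm1 hne).1
      have hwt : w ≠ t := by
        intro h; exact hwm1 (h ▸ htm.1)
      -- join w t = join w s
      have hjt : P.join w s = P.join w t := join_eq hjL hj1 htj hwt
      show P.meet (P.join w t) m2 = s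
      rw [← hjt]
      have hnej : P.join w s ≠ m2 := fun h => hwm2 (h ▸ hj1)
      exact (meet_unique hjL hm2 hnej ⟨hj2, hs.1⟩).symm
  calc (m1 ∩ P.K t2).ncard = ((fun s => P.meet (P.join w s) m2) '' (m1 ∩ P.K t2)).ncard :=
        (Set.ncard_image_of_injOn hbij.2.1).symm
    _ = (m2 ∩ P.K t2).ncard := by rw [hbij.image_eq]

end PPSetup

namespace PPSetup

variable {P : PPSetup α}

/-- Key local lemma: if a line `m` avoids colour `t3`, contains all of colour `t2`
(which has at least two points), and there is a point of colour `t1` off `m`,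
and colour `t3` is nonempty, we get a contradiction. -/
lemma lemL {t1 t2 t3 : Fin 3} (h12 : t1 ≠ t2) (h13 : t1 ≠ t3) (h23 : t2 ≠ t3)
    {m : Set α} (hm : m ∈ P.L) (hmt3 : m ∩ P.K t3 = ∅)
    {x : α} (hx : x ∈ P.K t1) (hxm : x ∉ m)
    (hY : P.K t2 ⊆ m) {y1 y2 : α} (hy1 : y1 ∈ P.K t2) (hy2 : y2 ∈ P.K t2) (hyy : y1 ≠ y2)
    {z : α} (hz : z ∈ P.K t3) : False := by
  have hzy1 : z ≠ y1 := fun h => h23.symm (by rw [← hy1.2, ← hz.2, h])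
  have hxy2 : x ≠ y2 := fun h => h12 (by rw [← hx.2, ← hy2.2, h])
  obtain ⟨hw1L, hzw1, hy1w1⟩ := join_spec hz.1 hy1.1 hzy1
  obtain ⟨hw2L, hxw2, hy2w2⟩ := join_spec hx.1 hy2.1 hxy2
  -- the two joins are distinct, otherwise that line has all three colours
  have hww : P.join z y1 ≠ P.join x y2 := by
    intro h
    obtain ⟨t, ht⟩ := P.hc _ hw1L
    rcases fin3_cases t1 t2 t3 t h12 h13 h23 with rfl | rfl | rfl
    · exact ht x (h ▸ hxw2) hx.2
    · exact ht y1 hy1w1 hy1.2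
    · exact ht z hzw1 hz.2
  haveI : Nonempty α := ⟨x⟩
  have hs := meet_spec hw1L hw2L hww
  set s := P.meet (P.join z y1) (P.join x y2) with hsdef
  have hsS : s ∈ P.S := P.hLS _ hw1L hs.1
  -- colour of s is t2
  have hcs1 := line_two_colors hw1L hzw1 hy1w1 (by rw [hz.2, hy1.2]; exact h23.symm) s hs.1
  have hcs2 := line_two_colors hw2L hxw2 hy2w2 (by rw [hx.2, hy2.2]; exact h12) s hs.2
  rw [hz.2, hy1.2] at hcs1
  rw [hx.2, hy2.2] at hcs2
  have hcs : P.c s = t2 := by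
    rcases hcs1 with h | h
    · rcases hcs2 with h' | h'
      · exact absurd (h'.symm.trans h) h13
      · exact h'
    · exact h
  have hsm : s ∈ m := hY ⟨hsS, hcs⟩
  -- s and y1 are both on join z y1 and on m; z ∉ m hence join z y1 ≠ m, so s = y1
  have hzm : z ∉ m := fun h => (Set.eq_empty_iff_forall_notMem.1 hmt3) z ⟨h, hz⟩
  have hy1m : y1 ∈ m := hY hy1
  have hsy1 : s = y1 := by
    by_contra hne
    have : P.join z y1 = m := line_unique hw1L hm hs.1 hy1w1 hsm hy1m hne
    exact hzm (this ▸ hzw1)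
  -- then y1 and y2 are both on join x y2 and m, so join x y2 = m, contradicting x ∉ m
  have hy1w2 : y1 ∈ P.join x y2 := hsy1 ▸ hs.2
  have : P.join x y2 = m := line_unique hw2L hm hy1w2 hy2w2 hy1m (hY hy2) hyy
  exact hxm (this ▸ hxw2)

/-- From "no colour class is the complement of a line" we get points of both other
colours off any line avoiding a given colour. -/
lemma offline {t1 t2 t3 : Fin 3} (h12 : t1 ≠ t2) (h13 : t1 ≠ t3) (h23 : t2 ≠ t3)
    {m : Set α} (hm : m ∈ P.L) (hmt3 : m ∩ P.K t3 = ∅)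
    (hcomp : P.K t3 ≠ P.S \ m)
    {x1 x2 : α} (hx1 : x1 ∈ P.K t1) (hx2 : x2 ∈ P.K t1) (hxx : x1 ≠ x2)
    {y1 y2 : α} (hy1 : y1 ∈ P.K t2) (hy2 : y2 ∈ P.K t2) (hyy : y1 ≠ y2)
    {z : α} (hz : z ∈ P.K t3) :
    (P.K t1 \ m).Nonempty ∧ (P.K t2 \ m).Nonempty := by
  have hsub : P.K t3 ⊆ P.S \ m := by
    intro p hp
    exact ⟨hp.1, fun h => (Set.eq_empty_iff_forall_notMem.1 hmt3) p ⟨h, hp⟩⟩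
  have hss : P.K t3 ⊂ P.S \ m := lt_of_le_of_ne hsub hcomp
  obtain ⟨p, hp1, hp2⟩ := Set.exists_of_ssubset hss
  have hpS : p ∈ P.S := hp1.1
  have hpc : P.c p = t1 ∨ P.c p = t2 := by
    rcases fin3_cases t1 t2 t3 (P.c p) h12 h13 h23 with h | h | h
    · exact Or.inl h
    · exact Or.inr h
    · exact absurd ⟨hpS, h⟩ hp2
  rcases hpc with h | h
  · refine ⟨⟨p, ⟨hpS, h⟩, hp1.2⟩, ?_⟩
    by_contra hcon
    rw [Set.not_nonempty_iff_eq_empty, Set.diff_eq_empty] at hcon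
    exact lemL h12 h13 h23 hm hmt3 ⟨hpS, h⟩ hp1.2 hcon hy1 hy2 hyy hz
  · refine ⟨?_, ⟨p, ⟨hpS, h⟩, hp1.2⟩⟩
    by_contra hcon
    rw [Set.not_nonempty_iff_eq_empty, Set.diff_eq_empty] at hcon
    exact lemL h12.symm h23 h13 hm hmt3 ⟨hpS, h⟩ hp1.2 hcon hx1 hx2 hxx hz

/-- decompose the cardinality of a line avoiding colour `t3` -/
lemma line_decomp {t1 t2 t3 : Fin 3} (h12 : t1 ≠ t2) (h13 : t1 ≠ t3) (h23 : t2 ≠ t3)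
    {m : Set α} (hm : m ∈ P.L) (hmt3 : m ∩ P.K t3 = ∅) :
    (m ∩ P.K t1).ncard + (m ∩ P.K t2).ncard = P.q + 1 := by
  have hdec : m = (m ∩ P.K t1) ∪ (m ∩ P.K t2) := by
    apply Set.Subset.antisymm
    · intro p hp
      have hpS : p ∈ P.S := P.hLS m hm hp
      rcases fin3_cases t1 t2 t3 (P.c p) h12 h13 h23 with h | h | h
      · exact Or.inl ⟨hp, hpS, h⟩
      · exact Or.inr ⟨hp, hpS, h⟩
      · exact ((Set.eq_empty_iff_forall_notMem.1 hmt3) p ⟨hp, hpS, h⟩).elim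
    · rintro p (hp | hp) <;> exact hp.1
  have hdisj : Disjoint (m ∩ P.K t1) (m ∩ P.K t2) := by
    rw [Set.disjoint_left]
    rintro p ⟨_, _, h1⟩ ⟨_, _, h2⟩
    exact h12 (h1 ▸ h2 ▸ rfl)
  have hfin1 : (m ∩ P.K t1).Finite := (line_finite hm).subset Set.inter_subset_left
  have hfin2 : (m ∩ P.K t2).Finite := (line_finite hm).subset Set.inter_subset_left
  rw [← Set.ncard_union_eq hdisj hfin1 hfin2, ← hdec, line_ncard hm]

end PPSetup

private lemma endgame {q β γ ab bb ag cg NB NC NA : ℕ}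
    (h1 : β + γ = q + 1) (h2 : ab + bb = q + 1) (h3 : ag + cg = q + 1)
    (hB : NB = bb * β) (hC : NC = cg * γ) (hA : NA = ag * ab)
    (hS : NA + NB + NC = (q + 1) * q + 1)
    (hβ : 1 ≤ β) (hγ : 1 ≤ γ) (hab : 2 ≤ ab) (hag : 1 ≤ ag) (hcg : 1 ≤ cg) (hbb : 1 ≤ bb)
    (s1 : bb < NB) (s2 : β < NB) (s3 : cg < NC) (s4 : γ < NC) (s5 : ab < NA) : False := by
  subst hB hC hA
  have fact : ∀ x y : ℕ, 1 ≤ x → x < x * y → 2 ≤ y := by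
    intro x y hx h
    by_contra hc
    push_neg at hc
    interval_cases y <;> omega
  have fact2 : ∀ x y : ℕ, 1 ≤ y → y < x * y → 2 ≤ x := fun x y hy h =>
    fact y x hy (by rwa [Nat.mul_comm])
  have hβ2 : 2 ≤ β := fact bb β hbb s1
  have hbb2 : 2 ≤ bb := fact2 bb β hβ s2
  have hγ2 : 2 ≤ γ := fact cg γ hcg s3
  have hcg2 : 2 ≤ cg := fact2 cg γ hγ s4
  have hag2 : 2 ≤ ag := fact2 ag ab (by omega) s5
  -- pass to integers
  have e1 : (β : ℤ) + γ = q + 1 := by exact_mod_cast h1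
  have e2 : (ab : ℤ) + bb = q + 1 := by exact_mod_cast h2
  have e3 : (ag : ℤ) + cg = q + 1 := by exact_mod_cast h3
  have eS : (ag : ℤ) * ab + bb * β + cg * γ = (q + 1) * q + 1 := by exact_mod_cast hS
  have zβ2 : (2 : ℤ) ≤ β := by exact_mod_cast hβ2
  have zγ2 : (2 : ℤ) ≤ γ := by exact_mod_cast hγ2
  have zbb2 : (2 : ℤ) ≤ bb := by exact_mod_cast hbb2
  have zcg2 : (2 : ℤ) ≤ cg := by exact_mod_cast hcg2
  have zab2 : (2 : ℤ) ≤ ab := by exact_mod_cast hab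
  have zag2 : (2 : ℤ) ≤ ag := by exact_mod_cast hag2
  -- bb ≤ β + γ - 2 and cg ≤ β + γ - 2
  have hbbU : (bb : ℤ) ≤ β + γ - 2 := by linarith
  have hcgU : (cg : ℤ) ≤ β + γ - 2 := by linarith
  clear fact fact2 h1 h2 h3 hS s1 s2 s3 s4 s5 hβ hγ hab hag hcg hbb hβ2 hbb2 hγ2 hcg2 hag2
  -- the key identity
  have key : ((bb : ℤ) - β) * ((cg : ℤ) - γ) = ((β : ℤ) - 1) * ((γ : ℤ) - 1) := by
    have hag' : (ag : ℤ) = β + γ - cg := by linarith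
    have hab' : (ab : ℤ) = β + γ - bb := by linarith
    have hq : (q : ℤ) = β + γ - 1 := by linarith
    rw [hag', hab', hq] at eS
    linear_combination eS
  have hpos : (1 : ℤ) ≤ ((β : ℤ) - 1) * ((γ : ℤ) - 1) := by
    have h1' : (1:ℤ) ≤ (β:ℤ) - 1 := by linarith
    have h2' : (1:ℤ) ≤ (γ:ℤ) - 1 := by linarith
    nlinarith [h1', h2']
  rcases lt_or_ge (β : ℤ) bb with h | h
  · -- bb > β, hence cg > γ
    have h4 : (γ : ℤ) < cg := by
      by_contra hcon
      push_neg at hcon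
      have hz : ((bb : ℤ) - β) * ((cg : ℤ) - γ) ≤ 0 :=
        mul_nonpos_iff.mpr (Or.inl ⟨by linarith, by linarith⟩)
      linarith
    have e1' : (bb : ℤ) - β ≤ γ - 2 := by linarith
    have e2' : (cg : ℤ) - γ ≤ β - 2 := by linarith
    have hc1 : (0:ℤ) ≤ (cg:ℤ) - γ := by linarith
    have hc2 : (0:ℤ) ≤ (γ:ℤ) - 2 := by linarith
    have hmul : ((bb : ℤ) - β) * ((cg : ℤ) - γ) ≤ ((γ:ℤ) - 2) * ((β:ℤ) - 2) :=
      mul_le_mul e1' e2' hc1 hc2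
    have expand : ((γ:ℤ) - 2) * ((β:ℤ) - 2) = ((β:ℤ) - 1) * ((γ:ℤ) - 1) - β - γ + 3 := by ring
    linarith
  · -- bb ≤ β; then bb < β and cg < γ
    have hlt : (bb : ℤ) < β := by
      rcases eq_or_lt_of_le h with heq | hlt
      · exfalso
        have hz : ((bb : ℤ) - β) * ((cg : ℤ) - γ) = 0 := by rw [← heq]; ring
        linarith
      · exact hlt
    have h4 : (cg : ℤ) < γ := by
      by_contra hcon
      push_neg at hcon
      have hz : ((bb : ℤ) - β) * ((cg : ℤ) - γ) ≤ 0 :=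
        mul_nonpos_iff.mpr (Or.inr ⟨by linarith, by linarith⟩)
      linarith
    have e1' : (β : ℤ) - bb ≤ β - 2 := by linarith
    have e2' : (γ : ℤ) - cg ≤ γ - 2 := by linarith
    have hc1 : (0:ℤ) ≤ (γ:ℤ) - cg := by linarith
    have hc2 : (0:ℤ) ≤ (β:ℤ) - 2 := by linarith
    have hmul : ((β : ℤ) - bb) * ((γ : ℤ) - cg) ≤ ((β:ℤ) - 2) * ((γ:ℤ) - 2) :=
      mul_le_mul e1' e2' hc1 hc2
    have hflip : ((β : ℤ) - bb) * ((γ : ℤ) - cg) = ((bb : ℤ) - β) * ((cg : ℤ) - γ) := by ring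
    have expand : ((β:ℤ) - 2) * ((γ:ℤ) - 2) = ((β:ℤ) - 1) * ((γ:ℤ) - 1) - β - γ + 3 := by ring
    linarith

namespace PPSetup

private lemma core2 {P : PPSetup α} {i j k : Fin 3} (hij : i ≠ j) (hik : i ≠ k) (hjk : j ≠ k)
    (hcompl : ∀ t : Fin 3, ∀ m ∈ P.L, P.K t ≠ P.S \ m)
    {a1 a2 b1 b2 c1 c2 : α}
    (ha1 : a1 ∈ P.K i) (ha2 : a2 ∈ P.K i) (haa : a1 ≠ a2)
    (hb1 : b1 ∈ P.K j) (hb2 : b2 ∈ P.K j) (hbb2 : b1 ≠ b2)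
    (hc1 : c1 ∈ P.K k) (hc2 : c2 ∈ P.K k) (hcc2 : c1 ≠ c2)
    (hn0k : P.join a1 a2 ∩ P.K k = ∅) : False := by
  classical
  haveI : Nonempty α := ⟨a1⟩
  have notmem : ∀ {m : Set α} {t : Fin 3} {p : α}, m ∩ P.K t = ∅ → p ∈ P.K t → p ∉ m :=
    fun hE hp hm => (Set.eq_empty_iff_forall_notMem.1 hE) _ ⟨hm, hp⟩
  have hb1c1 : b1 ≠ c1 := fun h => hjk ((hb1.2.symm.trans (h ▸ hc1.2)))
  have ha1c1 : a1 ≠ c1 := fun h => hik ((ha1.2.symm.trans (h ▸ hc1.2)))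
  -- the three reference lines
  obtain ⟨hn0L, ha1n0, ha2n0⟩ := join_spec ha1.1 ha2.1 haa
  obtain ⟨hl0L, hb1l0, hc1l0⟩ := join_spec hb1.1 hc1.1 hb1c1
  obtain ⟨hg0L, ha1g0, hc1g0⟩ := join_spec ha1.1 hc1.1 ha1c1
  set n0 := P.join a1 a2 with hn0def
  set l0 := P.join b1 c1 with hl0def
  set g0 := P.join a1 c1 with hg0def
  -- l0 misses colour i
  have hl0i : l0 ∩ P.K i = ∅ := by
    rw [Set.eq_empty_iff_forall_notMem]
    rintro p ⟨hpl, hpK⟩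
    have h := line_two_colors hl0L hb1l0 hc1l0 (by rw [hb1.2, hc1.2]; exact hjk) p hpl
    rw [hb1.2, hc1.2, hpK.2] at h
    rcases h with h | h
    · exact hij h
    · exact hik h
  -- g0 misses colour j
  have hg0j : g0 ∩ P.K j = ∅ := by
    rw [Set.eq_empty_iff_forall_notMem]
    rintro p ⟨hpl, hpK⟩
    have h := line_two_colors hg0L ha1g0 hc1g0 (by rw [ha1.2, hc1.2]; exact hik) p hpl
    rw [ha1.2, hc1.2, hpK.2] at h
    rcases h with h | h
    · exact hij.symm h
    · exact hjk h
  have ha1l0 : a1 ∉ l0 := notmem hl0i ha1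
  have hc1n0 : c1 ∉ n0 := notmem hn0k hc1
  have hb1g0 : b1 ∉ g0 := notmem hg0j hb1
  -- the six basic cardinalities
  set β := (l0 ∩ P.K j).ncard with hβdef
  set γ' := (l0 ∩ P.K k).ncard with hγdef
  set ab := (n0 ∩ P.K i).ncard with habdef
  set bb := (n0 ∩ P.K j).ncard with hbbdef
  set ag := (g0 ∩ P.K i).ncard with hagdef
  set cg := (g0 ∩ P.K k).ncard with hcgdef
  have h1 : β + γ' = P.q + 1 := line_decomp hjk hij.symm hik.symm hl0L hl0i
  have h2 : ab + bb = P.q + 1 := line_decomp hij hik hjk hn0L hn0k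
  have h3 : ag + cg = P.q + 1 := line_decomp hik hij hjk.symm hg0L hg0j
  -- |K j| = bb * β   (pencil at c1, reference line n0)
  have hBcnt : (P.K j).ncard = bb * β := by
    have hc1j : c1 ∉ P.K j := fun h => hjk (h.2.symm.trans hc1.2)
    have hblocks : ∀ l ∈ P.L, c1 ∈ l → (l ∩ P.K j).Nonempty → (l ∩ P.K j).ncard = β := by
      rintro l hl hcl ⟨b', hb'l, hb'K⟩
      have hli : l ∩ P.K i = ∅ := by
        rw [Set.eq_empty_iff_forall_notMem]
        rintro p ⟨hpl, hpK⟩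
        have h := line_two_colors hl hcl hb'l (by rw [hc1.2, hb'K.2]; exact hjk.symm) p hpl
        rw [hc1.2, hb'K.2, hpK.2] at h
        rcases h with h | h
        · exact hik h
        · exact hij h
      exact unif hij ha1 hl hl0L hli hl0i
    have H1 : ∀ l ∈ P.L, c1 ∈ l → (l ∩ P.K j).Nonempty → P.meet l n0 ∈ n0 ∩ P.K j := by
      rintro l hl hcl ⟨b', hb'l, hb'K⟩
      have hlne : l ≠ n0 := fun h => hc1n0 (h ▸ hcl)
      have hs := meet_spec hl hn0L hlne
      have hsS : P.meet l n0 ∈ P.S := P.hLS n0 hn0L hs.2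
      have hcol := line_two_colors hl hcl hb'l (by rw [hc1.2, hb'K.2]; exact hjk.symm)
        (P.meet l n0) hs.1
      rw [hc1.2, hb'K.2] at hcol
      rcases hcol with h | h
      · exact absurd hs.2 (notmem hn0k ⟨hsS, h⟩)
      · exact ⟨hs.2, hsS, h⟩
    have H2 : ∀ s ∈ n0 ∩ P.K j, (P.join c1 s ∩ P.K j).Nonempty := by
      intro s hsmem
      have hcs : c1 ≠ s := by
        intro h
        rw [← h] at hsmem
        exact hjk (hsmem.2.2.symm.trans hc1.2)
      obtain ⟨hjL', hj1, hj2⟩ := join_spec hc1.1 hsmem.2.1 hcs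
      exact ⟨s, hj2, hsmem.2⟩
    have e1 := countA (P := P) (X := P.K j) hc1.1 K_sub hc1j hblocks
    have e2 := countB (P := P) (X := P.K j) hc1.1 hn0L hc1n0
      (Set.inter_subset_left : n0 ∩ P.K j ⊆ n0) H1 H2
    rw [e2] at e1
    exact e1
  -- |K k| = cg * γ'   (pencil at b1, reference line g0)
  have hCcnt : (P.K k).ncard = cg * γ' := by
    have hb1k : b1 ∉ P.K k := fun h => hjk (hb1.2.symm.trans h.2)
    have hblocks : ∀ l ∈ P.L, b1 ∈ l → (l ∩ P.K k).Nonempty → (l ∩ P.K k).ncard = γ' := by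
      rintro l hl hbl ⟨c', hc'l, hc'K⟩
      have hli : l ∩ P.K i = ∅ := by
        rw [Set.eq_empty_iff_forall_notMem]
        rintro p ⟨hpl, hpK⟩
        have h := line_two_colors hl hbl hc'l (by rw [hb1.2, hc'K.2]; exact hjk) p hpl
        rw [hb1.2, hc'K.2, hpK.2] at h
        rcases h with h | h
        · exact hij h
        · exact hik h
      exact unif hik ha1 hl hl0L hli hl0i
    have H1 : ∀ l ∈ P.L, b1 ∈ l → (l ∩ P.K k).Nonempty → P.meet l g0 ∈ g0 ∩ P.K k := by
      rintro l hl hbl ⟨c', hc'l, hc'K⟩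
      have hlne : l ≠ g0 := fun h => hb1g0 (h ▸ hbl)
      have hs := meet_spec hl hg0L hlne
      have hsS : P.meet l g0 ∈ P.S := P.hLS g0 hg0L hs.2
      have hcol := line_two_colors hl hbl hc'l (by rw [hb1.2, hc'K.2]; exact hjk)
        (P.meet l g0) hs.1
      rw [hb1.2, hc'K.2] at hcol
      rcases hcol with h | h
      · exact absurd hs.2 (notmem hg0j ⟨hsS, h⟩)
      · exact ⟨hs.2, hsS, h⟩
    have H2 : ∀ s ∈ g0 ∩ P.K k, (P.join b1 s ∩ P.K k).Nonempty := by
      intro s hsmem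
      have hcs : b1 ≠ s := by
        intro h
        rw [← h] at hsmem
        exact hjk (hb1.2.symm.trans hsmem.2.2)
      obtain ⟨hjL', hj1, hj2⟩ := join_spec hb1.1 hsmem.2.1 hcs
      exact ⟨s, hj2, hsmem.2⟩
    have e1 := countA (P := P) (X := P.K k) hb1.1 K_sub hb1k hblocks
    have e2 := countB (P := P) (X := P.K k) hb1.1 hg0L hb1g0
      (Set.inter_subset_left : g0 ∩ P.K k ⊆ g0) H1 H2
    rw [e2] at e1
    exact e1
  -- |K i| = ag * ab   (pencil at b1, reference line g0)
  have hAcnt : (P.K i).ncard = ag * ab := by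
    have hb1i : b1 ∉ P.K i := fun h => hij (h.2.symm.trans hb1.2)
    have hblocks : ∀ l ∈ P.L, b1 ∈ l → (l ∩ P.K i).Nonempty → (l ∩ P.K i).ncard = ab := by
      rintro l hl hbl ⟨a', ha'l, ha'K⟩
      have hlk : l ∩ P.K k = ∅ := by
        rw [Set.eq_empty_iff_forall_notMem]
        rintro p ⟨hpl, hpK⟩
        have h := line_two_colors hl hbl ha'l (by rw [hb1.2, ha'K.2]; exact hij.symm) p hpl
        rw [hb1.2, ha'K.2, hpK.2] at h
        rcases h with h | h
        · exact hjk h.symm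
        · exact hik h.symm
      exact unif hik.symm hc1 hl hn0L hlk hn0k
    have H1 : ∀ l ∈ P.L, b1 ∈ l → (l ∩ P.K i).Nonempty → P.meet l g0 ∈ g0 ∩ P.K i := by
      rintro l hl hbl ⟨a', ha'l, ha'K⟩
      have hlne : l ≠ g0 := fun h => hb1g0 (h ▸ hbl)
      have hs := meet_spec hl hg0L hlne
      have hsS : P.meet l g0 ∈ P.S := P.hLS g0 hg0L hs.2
      have hcol := line_two_colors hl hbl ha'l (by rw [hb1.2, ha'K.2]; exact hij.symm)
        (P.meet l g0) hs.1
      rw [hb1.2, ha'K.2] at hcol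
      rcases hcol with h | h
      · exact absurd hs.2 (notmem hg0j ⟨hsS, h⟩)
      · exact ⟨hs.2, hsS, h⟩
    have H2 : ∀ s ∈ g0 ∩ P.K i, (P.join b1 s ∩ P.K i).Nonempty := by
      intro s hsmem
      have hcs : b1 ≠ s := by
        intro h
        rw [← h] at hsmem
        exact hij (hsmem.2.2.symm.trans hb1.2)
      obtain ⟨hjL', hj1, hj2⟩ := join_spec hb1.1 hsmem.2.1 hcs
      exact ⟨s, hj2, hsmem.2⟩
    have e1 := countA (P := P) (X := P.K i) hb1.1 K_sub hb1i hblocks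
    have e2 := countB (P := P) (X := P.K i) hb1.1 hg0L hb1g0
      (Set.inter_subset_left : g0 ∩ P.K i ⊆ g0) H1 H2
    rw [e2] at e1
    exact e1
  -- |S| = (q + 1) * q + 1   (pencil at b1, reference line g0)
  have hStot : P.S.ncard = (P.q + 1) * P.q + 1 := by
    have hb1X : b1 ∉ P.S \ {b1} := fun h => h.2 rfl
    have hblocks : ∀ l ∈ P.L, b1 ∈ l → (l ∩ (P.S \ {b1})).Nonempty →
        (l ∩ (P.S \ {b1})).ncard = P.q := by
      intro l hl hbl _
      have heq : l ∩ (P.S \ {b1}) = l \ {b1} := by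
        ext p
        constructor
        · rintro ⟨hpl, _, hp2⟩
          exact ⟨hpl, hp2⟩
        · rintro ⟨hpl, hp2⟩
          exact ⟨hpl, P.hLS l hl hpl, hp2⟩
      rw [heq]
      have hd := Set.ncard_diff_singleton_add_one hbl (line_finite hl)
      have hn := line_ncard hl
      omega
    have H1 : ∀ l ∈ P.L, b1 ∈ l → (l ∩ (P.S \ {b1})).Nonempty → P.meet l g0 ∈ g0 := by
      intro l hl hbl _
      have hlne : l ≠ g0 := fun h => hb1g0 (h ▸ hbl)
      exact (meet_spec hl hg0L hlne).2
    have H2 : ∀ s ∈ g0, (P.join b1 s ∩ (P.S \ {b1})).Nonempty := by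
      intro s hsg0
      have hsS : s ∈ P.S := P.hLS g0 hg0L hsg0
      have hcs : b1 ≠ s := fun h => hb1g0 (h ▸ hsg0)
      obtain ⟨hjL', hj1, hj2⟩ := join_spec hb1.1 hsS hcs
      exact ⟨s, hj2, hsS, fun h => hcs (Set.mem_singleton_iff.1 h).symm⟩
    have e1 := countA (P := P) (X := P.S \ {b1}) hb1.1 Set.diff_subset hb1X hblocks
    have e2 := countB (P := P) (X := P.S \ {b1}) hb1.1 hg0L hb1g0
      (le_refl g0) H1 H2
    rw [e2, line_ncard hg0L] at e1
    have hd := Set.ncard_diff_singleton_add_one hb1.1 P.hfin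
    omega
  -- |S| = |K i| + |K j| + |K k|
  have hpart : (P.K i).ncard + (P.K j).ncard + (P.K k).ncard = P.S.ncard := by
    have hU : P.S = (P.K i ∪ P.K j) ∪ P.K k := by
      apply Set.Subset.antisymm
      · intro p hp
        rcases fin3_cases i j k (P.c p) hij hik hjk with h | h | h
        · exact Or.inl (Or.inl ⟨hp, h⟩)
        · exact Or.inl (Or.inr ⟨hp, h⟩)
        · exact Or.inr ⟨hp, h⟩
      · rintro p ((hp | hp) | hp) <;> exact hp.1
    have dis1 : Disjoint (P.K i) (P.K j) := by
      rw [Set.disjoint_left]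
      rintro p ⟨_, hp1⟩ ⟨_, hp2⟩
      exact hij (hp1.symm.trans hp2)
    have dis2 : Disjoint (P.K i ∪ P.K j) (P.K k) := by
      rw [Set.disjoint_left]
      rintro p (⟨_, hp1⟩ | ⟨_, hp1⟩) ⟨_, hp2⟩
      · exact hik (hp1.symm.trans hp2)
      · exact hjk (hp1.symm.trans hp2)
    have hKfin : ∀ t : Fin 3, (P.K t).Finite := fun t => P.hfin.subset K_sub
    rw [hU, Set.ncard_union_eq dis2 ((hKfin i).union (hKfin j)) (hKfin k),
      Set.ncard_union_eq dis1 (hKfin i) (hKfin j)]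
  have hSsum : (P.K i).ncard + (P.K j).ncard + (P.K k).ncard = (P.q + 1) * P.q + 1 :=
    hpart.trans hStot
  -- lower bounds
  have hl0fin : ∀ t : Fin 3, (l0 ∩ P.K t).Finite :=
    fun t => (line_finite hl0L).subset Set.inter_subset_left
  have hn0fin : ∀ t : Fin 3, (n0 ∩ P.K t).Finite :=
    fun t => (line_finite hn0L).subset Set.inter_subset_left
  have hg0fin : ∀ t : Fin 3, (g0 ∩ P.K t).Finite :=
    fun t => (line_finite hg0L).subset Set.inter_subset_left
  have hβ1 : 1 ≤ β := (Set.ncard_pos (hl0fin j)).2 ⟨b1, hb1l0, hb1⟩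
  have hγ1 : 1 ≤ γ' := (Set.ncard_pos (hl0fin k)).2 ⟨c1, hc1l0, hc1⟩
  have hag1 : 1 ≤ ag := (Set.ncard_pos (hg0fin i)).2 ⟨a1, ha1g0, ha1⟩
  have hcg1 : 1 ≤ cg := (Set.ncard_pos (hg0fin k)).2 ⟨c1, hc1g0, hc1⟩
  have hab2 : 2 ≤ ab := by
    have := (Set.one_lt_ncard_iff (hn0fin i)).2 ⟨a1, a2, ⟨ha1n0, ha1⟩, ⟨ha2n0, ha2⟩, haa⟩
    omega
  have hbb1 : 1 ≤ bb := by
    have hne : n0 ≠ l0 := fun h => ha1l0 (h ▸ ha1n0)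
    have hs := meet_spec hn0L hl0L hne
    have hsS : P.meet n0 l0 ∈ P.S := P.hLS n0 hn0L hs.1
    have hcj : P.c (P.meet n0 l0) = j := by
      rcases fin3_cases i j k (P.c (P.meet n0 l0)) hij hik hjk with h | h | h
      · exact absurd hs.2 (notmem hl0i ⟨hsS, h⟩)
      · exact h
      · exact absurd hs.1 (notmem hn0k ⟨hsS, h⟩)
    exact (Set.ncard_pos (hn0fin j)).2 ⟨P.meet n0 l0, hs.1, hsS, hcj⟩
  -- strict upper bounds from points off the reference lines
  have strictlt : ∀ {m : Set α} {t : Fin 3}, m ∈ P.L → (P.K t \ m).Nonempty →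
      (m ∩ P.K t).ncard < (P.K t).ncard := by
    rintro m t hm ⟨p, hpK, hpm⟩
    apply Set.ncard_lt_ncard _ (P.hfin.subset K_sub)
    exact ⟨Set.inter_subset_right, fun hsub => hpm (hsub hpK).1⟩
  obtain ⟨oBl0, oCl0⟩ := offline hjk hij.symm hik.symm hl0L hl0i (hcompl i l0 hl0L)
    hb1 hb2 hbb2 hc1 hc2 hcc2 ha1
  obtain ⟨oAn0, oBn0⟩ := offline hij hik hjk hn0L hn0k (hcompl k n0 hn0L)
    ha1 ha2 haa hb1 hb2 hbb2 hc1
  obtain ⟨oAg0, oCg0⟩ := offline hik hij hjk.symm hg0L hg0j (hcompl j g0 hg0L)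
    ha1 ha2 haa hc1 hc2 hcc2 hb1
  have s1 : bb < (P.K j).ncard := strictlt hn0L oBn0
  have s2 : β < (P.K j).ncard := strictlt hl0L oBl0
  have s3 : cg < (P.K k).ncard := strictlt hg0L oCg0
  have s4 : γ' < (P.K k).ncard := strictlt hl0L oCl0
  have s5 : ab < (P.K i).ncard := strictlt hn0L oAn0
  exact endgame h1 h2 h3 hBcnt hCcnt hAcnt hSsum hβ1 hγ1 hab2 hag1 hcg1 hbb1 s1 s2 s3 s4 s5

end PPSetup

namespace PPSetup

private lemma core {P : PPSetup α} {i j k : Fin 3} (hij : i ≠ j) (hik : i ≠ k) (hjk : j ≠ k)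
    (hcompl : ∀ t : Fin 3, ∀ m ∈ P.L, P.K t ≠ P.S \ m)
    {a1 a2 b1 b2 c1 c2 : α}
    (ha1 : a1 ∈ P.K i) (ha2 : a2 ∈ P.K i) (haa : a1 ≠ a2)
    (hb1 : b1 ∈ P.K j) (hb2 : b2 ∈ P.K j) (hbb2 : b1 ≠ b2)
    (hc1 : c1 ∈ P.K k) (hc2 : c2 ∈ P.K k) (hcc2 : c1 ≠ c2) : False := by
  obtain ⟨hn0L, ha1n0, ha2n0⟩ := join_spec ha1.1 ha2.1 haa
  obtain ⟨t, ht⟩ := P.hc _ hn0L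
  have hti : t ≠ i := fun h => ht a1 ha1n0 (h ▸ ha1.2)
  have hmiss : P.join a1 a2 ∩ P.K t = ∅ := by
    rw [Set.eq_empty_iff_forall_notMem]
    rintro p ⟨hpl, hpK⟩
    exact ht p hpl hpK.2
  rcases fin3_cases i j k t hij hik hjk with h | h | h
  · exact hti h
  · -- the line a1 a2 misses colour j : apply core2 with j and k swapped
    exact core2 hik hij hjk.symm hcompl ha1 ha2 haa hc1 hc2 hcc2 hb1 hb2 hbb2 (h ▸ hmiss)
  · exact core2 hij hik hjk hcompl ha1 ha2 haa hb1 hb2 hbb2 hc1 hc2 hcc2 (h ▸ hmiss)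

end PPSetup

theorem statement_13' (S : Set α) (L : Set (Set α)) (q : ℕ) (hfin : S.Finite)
    (hLS : ∀ ℓ ∈ L, ℓ ⊆ S)
    (hP1 : ∀ p ∈ S, ∀ p' ∈ S, p ≠ p' → ∃! ℓ, ℓ ∈ L ∧ p ∈ ℓ ∧ p' ∈ ℓ)
    (hP2 : ∀ ℓ ∈ L, ∀ ℓ' ∈ L, ℓ ≠ ℓ' → ∃! p, p ∈ ℓ ∩ ℓ')
    (horder : ∀ ℓ ∈ L, ℓ.encard = ((q + 1 : ℕ) : ℕ∞))
    (c : α → Fin 3)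
    (hc : ∀ ℓ ∈ L, ∃ i : Fin 3, ∀ p ∈ ℓ, c p ≠ i) :
    (∃ i : Fin 3, ∀ p ∈ S, c p ≠ i) ∨
    (∃ i : Fin 3, {p ∈ S | c p = i}.encard = 1) ∨
    (∃ i : Fin 3, ∃ ℓ ∈ L, {p ∈ S | c p = i} = S \ ℓ) := by
  by_contra hcon
  push_neg at hcon
  obtain ⟨h1, h2, h3⟩ := hcon
  set P : PPSetup α := ⟨S, L, q, c, hfin, hLS, hP1, hP2, horder, hc⟩ with hPdef
  have hKeq : ∀ t : Fin 3, P.K t = {p ∈ S | c p = t} := fun t => rfl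
  -- each colour class has at least two elements
  have hTwo : ∀ t : Fin 3, ∃ x y : α, x ∈ P.K t ∧ y ∈ P.K t ∧ x ≠ y := by
    intro t
    obtain ⟨p, hpS, hpt⟩ := h1 t
    have hne : (P.K t).Nonempty := ⟨p, hpS, hpt⟩
    have h1' : 1 ≤ (P.K t).encard := Set.one_le_encard_iff_nonempty.2 hne
    have hlt : 1 < (P.K t).encard := lt_of_le_of_ne h1' (Ne.symm (h2 t))
    obtain ⟨x, y, hx, hy, hxy⟩ := Set.one_lt_encard_iff.1 hlt
    exact ⟨x, y, hx, hy, hxy⟩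
  obtain ⟨a1, a2, ha1, ha2, haa⟩ := hTwo 0
  obtain ⟨b1, b2, hb1, hb2, hbb⟩ := hTwo 1
  obtain ⟨c1, c2, hc1, hc2, hcc⟩ := hTwo 2
  have hcompl : ∀ t : Fin 3, ∀ m ∈ P.L, P.K t ≠ P.S \ m := fun t m hm => h3 t m hm
  exact PPSetup.core (by decide) (by decide) (by decide) hcompl
    ha1 ha2 haa hb1 hb2 hbb hc1 hc2 hcc


/-- In any 3-coloring of the points of a finite projective plane of order `q` in which
every line misses some color, either some color class is empty, or some color class is a
single point, or some color class is the complement of a line. -/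
theorem statement_13 (S : Set α) (L : Set (Set α)) (q : ℕ) (hfin : S.Finite)
    (hLS : ∀ ℓ ∈ L, ℓ ⊆ S)
    (hP1 : ∀ p ∈ S, ∀ p' ∈ S, p ≠ p' → ∃! ℓ, ℓ ∈ L ∧ p ∈ ℓ ∧ p' ∈ ℓ)
    (hP2 : ∀ ℓ ∈ L, ∀ ℓ' ∈ L, ℓ ≠ ℓ' → ∃! p, p ∈ ℓ ∩ ℓ')
    (hP3 : ∃ p₁ p₂ p₃ p₄ : α, ({p₁, p₂, p₃, p₄} : Set α) ⊆ S ∧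
      ({p₁, p₂, p₃, p₄} : Set α).encard = 4 ∧
      ∀ ℓ ∈ L, (({p₁, p₂, p₃, p₄} : Set α) ∩ ℓ).encard ≤ 2)
    (horder : ∀ ℓ ∈ L, ℓ.encard = ((q + 1 : ℕ) : ℕ∞))
    (c : α → Fin 3)
    (hc : ∀ ℓ ∈ L, ∃ i : Fin 3, ∀ p ∈ ℓ, c p ≠ i) :
    (∃ i : Fin 3, ∀ p ∈ S, c p ≠ i) ∨
    (∃ i : Fin 3, {p ∈ S | c p = i}.encard = 1) ∨
    (∃ i : Fin 3, ∃ ℓ ∈ L, {p ∈ S | c p = i} = S \ ℓ) := by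
  exact statement_13' S L q hfin hLS hP1 hP2 horder c hc
end

section
/- Let M = (S, I) be the paving matroid of rank 3 defined by the lines of a projective plane of order q, i.e., S is the point set and the bases of M are the 3-element sets of non-collinear points. If N = (S, J) is a partition matroid with N ⪯ M, then χ(N) ≥ (|S|−1)/2 if q is odd, and χ(N) ≥ (|S|+1)/2 if q is even, where |S| = q²+q+1. -/
open Set

variable {α : Type*}

section Aux
variable {α : Type*}

lemma pencil_bound (q w w' : ℕ) (hq : 1 ≤ q) (h : w + w' = q + 1) :
    (q^2+q ≤ 2*(q*w) ∧ (Even q → q^2+q+2 ≤ 2*(q*w))) ∨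
    (q^2+q ≤ 2*(q*w') ∧ (Even q → q^2+q+2 ≤ 2*(q*w'))) := by
  have key : ∀ x y : ℕ, x + y = q + 1 → y ≤ x →
      q^2+q ≤ 2*(q*x) ∧ (Even q → q^2+q+2 ≤ 2*(q*x)) := by
    intro x y hxy hle
    constructor
    · have h1 : q + 1 ≤ x + x := by omega
      have := Nat.mul_le_mul_left q h1
      nlinarith
    · intro he
      obtain ⟨k, hk⟩ := he
      rcases (by omega : 2 ≤ q ∨ q = 1) with hq2 | hq1
      · have h1 : q + 2 ≤ x + x := by omega
        have := Nat.mul_le_mul_left q h1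
        nlinarith
      · omega
  rcases le_total w' w with hle | hle
  · exact Or.inl (key w w' h hle)
  · exact Or.inr (key w' w (by omega) hle)

lemma qq_bound (q : ℕ) (hq : 1 ≤ q) :
    q^2+q ≤ 2*(q*q) ∧ (Even q → q^2+q+2 ≤ 2*(q*q)) := by
  refine ⟨by nlinarith, fun he => ?_⟩
  obtain ⟨k, hk⟩ := he
  have : 2 ≤ q := by omega
  nlinarith

lemma pp_arith (q a b u u' v v' : ℕ) (hq : 1 ≤ q)
    (ha : 1 ≤ a) (hb : 1 ≤ b) (hu : 1 ≤ u) (hu' : 1 ≤ u') (hv : 1 ≤ v) (hv' : 1 ≤ v')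
    (hab : a + b = q + 1) (huu : u + u' = q + 1) (hvv : v + v' = q + 1)
    (hsum : a*v + b*u + u'*v' = q^2+q+1) :
    (q^2+q ≤ 2*(a*v) ∧ (Even q → q^2+q+2 ≤ 2*(a*v))) ∨
    (q^2+q ≤ 2*(b*u) ∧ (Even q → q^2+q+2 ≤ 2*(b*u))) ∨
    (q^2+q ≤ 2*(u'*v') ∧ (Even q → q^2+q+2 ≤ 2*(u'*v'))) := by
  rcases (by omega : q = 1 ∨ 2 ≤ q) with hq1 | hq2
  · obtain ⟨ha1, hv1⟩ : a = 1 ∧ v = 1 := by omega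
    subst hq1 ha1 hv1
    exact Or.inl ⟨by omega, fun he => by obtain ⟨k, hk⟩ := he; omega⟩
  have hbZ : (b:ℤ) = (q:ℤ) + 1 - a := by omega
  have huZ : (u':ℤ) = (q:ℤ) + 1 - u := by omega
  have hvZ : (v':ℤ) = (q:ℤ) + 1 - v := by omega
  have hsumZ : (a:ℤ)*v + (b:ℤ)*u + (u':ℤ)*(v':ℤ) = (q:ℤ)^2+q+1 := by exact_mod_cast hsum
  have h1 : (a:ℤ)*v + ((q:ℤ)+1-a)*u + ((q:ℤ)+1-u)*((q:ℤ)+1-v) = (q:ℤ)^2+(q:ℤ)+1 := by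
    rw [← hbZ, ← huZ, ← hvZ]; exact hsumZ
  have E1 : ((v:ℤ)-1)*((a:ℤ)+u-q-1) = ((a:ℤ)-1)*((u:ℤ)-1) := by linear_combination h1
  have E2 : ((v:ℤ)-q)*((a:ℤ)+u-q-1) = ((a:ℤ)-q)*((u:ℤ)-q) := by linear_combination h1
  have haq : a ≤ q := by omega
  have huq : u ≤ q := by omega
  have hvq : v ≤ q := by omega
  by_cases hs0 : (a:ℤ) + u - q - 1 = 0
  · -- a + u = q + 1 : forces {a,u} = {1,q}
    have f1 : a = 1 ∨ u = 1 := by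
      have h0 : ((a:ℤ)-1)*((u:ℤ)-1) = 0 := by rw [← E1, hs0]; ring
      rcases mul_eq_zero.mp h0 with h | h
      · left; omega
      · right; omega
    have f2 : a = q ∨ u = q := by
      have h0 : ((a:ℤ)-q)*((u:ℤ)-q) = 0 := by rw [← E2, hs0]; ring
      rcases mul_eq_zero.mp h0 with h | h
      · left; omega
      · right; omega
    rcases f1 with ha1 | hu1
    · have huq' : u = q := by omega
      -- b = q, so b*u = q*q
      have hbq : b = q := by omega
      refine Or.inr (Or.inl ?_)
      rw [hbq, huq']
      exact qq_bound q hq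
    · have haq' : a = q := by omega
      -- b = 1, u = 1 : pencil on (v, v'): a*v = q*v, u'*v' = q*v'
      have hu'q : u' = q := by omega
      rcases pencil_bound q v v' hq hvv with h | h
      · exact Or.inl (by rw [haq']; exact h)
      · refine Or.inr (Or.inr ?_)
        rw [hu'q]
        exact h
  · -- s ≠ 0
    by_cases ha1 : a = 1
    · -- E1 forces v = 1, then b = q, v' = q
      have hv1 : v = 1 := by
        have h0 : ((v:ℤ)-1)*((a:ℤ)+u-q-1) = 0 := by rw [E1, ha1]; ring
        rcases mul_eq_zero.mp h0 with h | h
        · omega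
        · exact absurd h hs0
      have hbq : b = q := by omega
      have hv'q : v' = q := by omega
      rcases pencil_bound q u u' hq huu with h | h
      · exact Or.inr (Or.inl (by rw [hbq]; exact h))
      · refine Or.inr (Or.inr ?_)
        rw [hv'q]
        simpa [Nat.mul_comm] using h
    by_cases hu1 : u = 1
    · have hv1 : v = 1 := by
        have h0 : ((v:ℤ)-1)*((a:ℤ)+u-q-1) = 0 := by rw [E1, hu1]; ring
        rcases mul_eq_zero.mp h0 with h | h
        · omega
        · exact absurd h hs0
      have hu'q : u' = q := by omega
      have hv'q : v' = q := by omega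
      refine Or.inr (Or.inr ?_)
      rw [hu'q, hv'q]
      exact qq_bound q hq
    by_cases haq' : a = q
    · have hvq' : v = q := by
        have h0 : ((v:ℤ)-q)*((a:ℤ)+u-q-1) = 0 := by rw [E2, haq']; ring
        rcases mul_eq_zero.mp h0 with h | h
        · omega
        · exact absurd h hs0
      exact Or.inl (by rw [haq', hvq']; exact qq_bound q hq)
    by_cases huq' : u = q
    · have hvq'' : v = q := by
        have h0 : ((v:ℤ)-q)*((a:ℤ)+u-q-1) = 0 := by rw [E2, huq']; ring
        rcases mul_eq_zero.mp h0 with h | h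
        · omega
        · exact absurd h hs0
      have hv'1 : v' = 1 := by omega
      have hu'1 : u' = 1 := by omega
      rcases pencil_bound q a b hq hab with h | h
      · exact Or.inl (by rw [hvq'']; simpa [Nat.mul_comm] using h)
      · exact Or.inr (Or.inl (by rw [huq']; simpa [Nat.mul_comm] using h))
    · -- 2 ≤ a ≤ q-1, 2 ≤ u ≤ q-1 : contradiction
      exfalso
      have hA1 : 1 ≤ (a:ℤ) - 1 := by omega
      have hA2 : 1 ≤ (q:ℤ) - a := by omega
      have hU1 : 1 ≤ (u:ℤ) - 1 := by omega
      have hU2 : 1 ≤ (q:ℤ) - u := by omega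
      have hV1 : 0 ≤ (v:ℤ) - 1 := by omega
      have hV2 : 0 ≤ (q:ℤ) - v := by omega
      rcases lt_trichotomy ((a:ℤ)+u-q-1) 0 with h | h | h
      · have p1 : 1*1 ≤ ((a:ℤ)-1)*((u:ℤ)-1) :=
          mul_le_mul hA1 hU1 (by linarith) (by linarith)
        have p2 : ((v:ℤ)-1)*((a:ℤ)+u-q-1) ≤ ((v:ℤ)-1)*0 :=
          mul_le_mul_of_nonneg_left (le_of_lt h) hV1
        rw [mul_zero] at p2
        linarith [E1]
      · exact hs0 h
      · have p1 : 1*1 ≤ ((q:ℤ)-a)*((q:ℤ)-u) :=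
          mul_le_mul hA2 hU2 (by linarith) (by linarith)
        have rid : ((a:ℤ)-q)*((u:ℤ)-q) = ((q:ℤ)-a)*((q:ℤ)-u) := by ring
        have p2 : ((v:ℤ)-q)*((a:ℤ)+u-q-1) ≤ 0*((a:ℤ)+u-q-1) :=
          mul_le_mul_of_nonneg_right (by linarith) (le_of_lt h)
        rw [zero_mul] at p2
        linarith [E2]


lemma line_unique {S : Set α} {L : Set (Set α)}
    (hP1 : ∀ p ∈ S, ∀ p' ∈ S, p ≠ p' → ∃! ℓ, ℓ ∈ L ∧ p ∈ ℓ ∧ p' ∈ ℓ)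
    {ℓ ℓ' : Set α} {x y : α} (hx : x ∈ S) (hy : y ∈ S) (hxy : x ≠ y)
    (hl : ℓ ∈ L) (hl' : ℓ' ∈ L) (hxl : x ∈ ℓ) (hyl : y ∈ ℓ)
    (hxl' : x ∈ ℓ') (hyl' : y ∈ ℓ') : ℓ = ℓ' := by
  obtain ⟨m, -, hm⟩ := hP1 x hx y hy hxy
  rw [hm ℓ ⟨hl, hxl, hyl⟩, hm ℓ' ⟨hl', hxl', hyl'⟩]

lemma proj_le {S : Set α} {L : Set (Set α)}
    (hLS : ∀ ℓ ∈ L, ℓ ⊆ S)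
    (hP1 : ∀ p ∈ S, ∀ p' ∈ S, p ≠ p' → ∃! ℓ, ℓ ∈ L ∧ p ∈ ℓ ∧ p' ∈ ℓ)
    (hP2 : ∀ ℓ ∈ L, ∀ ℓ' ∈ L, ℓ ≠ ℓ' → ∃! p, p ∈ ℓ ∩ ℓ')
    {ℓ₁ ℓ₂ : Set α} (h1 : ℓ₁ ∈ L) (h2 : ℓ₂ ∈ L) {z : α} (hzS : z ∈ S)
    (hz1 : z ∉ ℓ₁) (hz2 : z ∉ ℓ₂) {D : Set α} (hDS : D ⊆ S) (hzD : z ∉ D)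
    (hfin2 : (ℓ₂ ∩ D).Finite)
    (hcross : ∀ ℓ ∈ L, z ∈ ℓ → (ℓ ∩ ℓ₁ ∩ D).Nonempty → ℓ ∩ ℓ₂ ⊆ D) :
    (ℓ₁ ∩ D).ncard ≤ (ℓ₂ ∩ D).ncard := by
  have key : ∀ w, ∃ p, w ∈ ℓ₁ ∩ D → p ∈ ℓ₂ ∩ D ∧ ∃ ℓ ∈ L, z ∈ ℓ ∧ w ∈ ℓ ∧ p ∈ ℓ := by
    intro w
    by_cases hw : w ∈ ℓ₁ ∩ D
    · have hwS : w ∈ S := hDS hw.2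
      have hwz : z ≠ w := fun h => hzD (h ▸ hw.2)
      obtain ⟨ℓ, ⟨hlL, hzl, hwl⟩, -⟩ := hP1 z hzS w hwS hwz
      have hne : ℓ ≠ ℓ₂ := fun h => hz2 (h ▸ hzl)
      obtain ⟨p, hp, -⟩ := hP2 ℓ hlL ℓ₂ h2 hne
      exact ⟨p, fun _ => ⟨⟨hp.2, hcross ℓ hlL hzl ⟨w, ⟨hwl, hw.1⟩, hw.2⟩ hp⟩,
        ℓ, hlL, hzl, hwl, hp.1⟩⟩
    · exact ⟨z, fun h => absurd h hw⟩
  choose f hf using key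
  apply Set.ncard_le_ncard_of_injOn f (fun w hw => (hf w hw).1) _ hfin2
  intro w hw w' hw' heq
  obtain ⟨⟨hfw2, hfwD⟩, ℓ, hlL, hzl, hwl, hpl⟩ := hf w hw
  obtain ⟨⟨hfw2', hfwD'⟩, ℓ', hlL', hzl', hwl', hpl'⟩ := hf w' hw'
  rw [← heq] at hpl' hfwD' hfw2'
  have hfz : z ≠ f w := fun h => hzD (h ▸ hfwD)
  have hfS : f w ∈ S := hDS hfwD
  have hll : ℓ = ℓ' := line_unique hP1 hzS hfS hfz hlL hlL' hzl hpl hzl' hpl'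
  by_contra hne
  have hwS : w ∈ S := hDS hw.2
  have hwS' : w' ∈ S := hDS hw'.2
  have : ℓ = ℓ₁ := line_unique hP1 hwS hwS' hne hlL h1 hwl (hll ▸ hwl') hw.1 hw'.1
  exact hz1 (this ▸ hzl)

lemma ncard_biUnion_const' {F : Set α} (hF : F.Finite) (g : α → Set α) (v : ℕ) :
    (∀ w ∈ F, (g w).Finite) → (∀ w ∈ F, ∀ w' ∈ F, w ≠ w' → Disjoint (g w) (g w')) →
    (∀ w ∈ F, (g w).ncard = v) → (⋃ w ∈ F, g w).ncard = F.ncard * v := by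
  refine Set.Finite.induction_on (motive := fun F _ => (∀ w ∈ F, (g w).Finite) →
    (∀ w ∈ F, ∀ w' ∈ F, w ≠ w' → Disjoint (g w) (g w')) →
    (∀ w ∈ F, (g w).ncard = v) → (⋃ w ∈ F, g w).ncard = F.ncard * v) F hF
    (by intro _ _ _; simp) ?_
  intro a F' haF' hF' ih hfin hdisj hsize
  have hmem : ∀ w ∈ F', w ∈ insert a F' := fun w hw => Set.mem_insert_of_mem a hw
  have hamem : a ∈ insert a F' := Set.mem_insert a F'
  have hdg : Disjoint (g a) (⋃ w ∈ F', g w) := by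
    simp only [Set.disjoint_iUnion_right]
    intro w hw
    exact hdisj a hamem w (hmem w hw) (fun h => haF' (h ▸ hw))
  have hUfin : (⋃ w ∈ F', g w).Finite := hF'.biUnion (fun w hw => hfin w (hmem w hw))
  rw [Set.biUnion_insert, Set.ncard_union_eq hdg (hfin a hamem) hUfin,
    ih (fun w hw => hfin w (hmem w hw))
      (fun w hw w' hw' hne => hdisj w (hmem w hw) w' (hmem w' hw') hne)
      (fun w hw => hsize w (hmem w hw)),
    Set.ncard_insert_of_notMem haF' hF', hsize a hamem]
  ring

lemma pencil_count {S : Set α} {L : Set (Set α)}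
    (hLS : ∀ ℓ ∈ L, ℓ ⊆ S)
    (hP1 : ∀ p ∈ S, ∀ p' ∈ S, p ≠ p' → ∃! ℓ, ℓ ∈ L ∧ p ∈ ℓ ∧ p' ∈ ℓ)
    (hP2 : ∀ ℓ ∈ L, ∀ ℓ' ∈ L, ℓ ≠ ℓ' → ∃! p, p ∈ ℓ ∩ ℓ')
    (hSfin : S.Finite)
    {m₀ : Set α} (hm₀ : m₀ ∈ L) {z : α} (hzS : z ∈ S) (hzm : z ∉ m₀)
    {D : Set α} (hDS : D ⊆ S) (hzD : z ∉ D) {v : ℕ}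
    (hcut : ∀ ℓ ∈ L, z ∈ ℓ → (ℓ ∩ D).Nonempty → (ℓ ∩ m₀ ⊆ D ∧ (ℓ ∩ D).ncard = v)) :
    D.ncard = (m₀ ∩ D).ncard * v := by
  have hex : ∀ x y : α, ∃ ℓ, x ∈ S → y ∈ S → x ≠ y → ℓ ∈ L ∧ x ∈ ℓ ∧ y ∈ ℓ := by
    intro x y
    by_cases h : x ∈ S ∧ y ∈ S ∧ x ≠ y
    · obtain ⟨ℓ, hℓ, -⟩ := hP1 x h.1 y h.2.1 h.2.2
      exact ⟨ℓ, fun _ _ _ => hℓ⟩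
    · exact ⟨∅, fun hx hy hxy => absurd ⟨hx, hy, hxy⟩ h⟩
  choose ln hln using hex
  have hwprop : ∀ w ∈ m₀ ∩ D, ln z w ∈ L ∧ z ∈ ln z w ∧ w ∈ ln z w :=
    fun w hw => hln z w hzS (hDS hw.2) (fun h => hzD (h ▸ hw.2))
  have cover : D = ⋃ w ∈ m₀ ∩ D, (ln z w ∩ D) := by
    apply Set.Subset.antisymm
    · intro y hyD
      have hyS : y ∈ S := hDS hyD
      have hzy : z ≠ y := fun h => hzD (h ▸ hyD)
      obtain ⟨hlL, hzl, hyl⟩ := hln z y hzS hyS hzy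
      obtain ⟨hsub, -⟩ := hcut (ln z y) hlL hzl ⟨y, hyl, hyD⟩
      by_cases hym : y ∈ m₀
      · exact Set.mem_biUnion ⟨hym, hyD⟩ ⟨hyl, hyD⟩
      · have hne : ln z y ≠ m₀ := fun h => hzm (h ▸ hzl)
        obtain ⟨p, hp, -⟩ := hP2 (ln z y) hlL m₀ hm₀ hne
        have hpD : p ∈ D := hsub hp
        have hpS : p ∈ S := hDS hpD
        have hzp : z ≠ p := fun h => hzD (h ▸ hpD)
        obtain ⟨hlL', hzl', hpl'⟩ := hln z p hzS hpS hzp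
        have heq : ln z p = ln z y := line_unique hP1 hzS hpS hzp hlL' hlL hzl' hpl' hzl hp.1
        exact Set.mem_biUnion ⟨hp.2, hpD⟩ (by rw [heq]; exact ⟨hyl, hyD⟩)
    · exact Set.iUnion₂_subset fun w hw => Set.inter_subset_right
  have hdisj : ∀ w ∈ m₀ ∩ D, ∀ w' ∈ m₀ ∩ D, w ≠ w' →
      Disjoint (ln z w ∩ D) (ln z w' ∩ D) := by
    intro w hw w' hw' hne
    rw [Set.disjoint_left]
    intro t ht ht'
    obtain ⟨hwL, hwz, hww⟩ := hwprop w hw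
    obtain ⟨hwL', hwz', hww'⟩ := hwprop w' hw'
    have htz : z ≠ t := fun h => hzD (h ▸ ht.2)
    have htS : t ∈ S := hDS ht.2
    have hlines : ln z w = ln z w' :=
      line_unique hP1 hzS htS htz hwL hwL' hwz ht.1 hwz' ht'.1
    have hm : ln z w = m₀ :=
      line_unique hP1 (hDS hw.2) (hDS hw'.2) hne hwL hm₀ hww (hlines ▸ hww') hw.1 hw'.1
    exact hzm (hm ▸ hwz)
  have hsizes : ∀ w ∈ m₀ ∩ D, (ln z w ∩ D).ncard = v := fun w hw =>
    (hcut _ (hwprop w hw).1 (hwprop w hw).2.1 ⟨w, (hwprop w hw).2.2, hw.2⟩).2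
  conv_lhs => rw [cover]
  exact ncard_biUnion_const' (hSfin.subset (fun t ht => hLS m₀ hm₀ ht.1)) _ v
    (fun w hw => hSfin.subset (fun t ht => hDS ht.2)) hdisj hsizes

end Aux

/-- Let `M` be the rank-3 paving matroid defined by the lines of a projective plane of
order `q` (independent sets: sets of at most 3 non-collinear points). Every partition
matroid `N ⪯ M` has a class of size at least `(|S|-1)/2` if `q` is odd, and at least
`(|S|+1)/2` if `q` is even, where `|S| = q² + q + 1`. -/
theorem statement_15 (S : Set α) (L : Set (Set α)) (q : ℕ) (hfin : S.Finite)
    (hLS : ∀ ℓ ∈ L, ℓ ⊆ S)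
    (hP1 : ∀ p ∈ S, ∀ p' ∈ S, p ≠ p' → ∃! ℓ, ℓ ∈ L ∧ p ∈ ℓ ∧ p' ∈ ℓ)
    (hP2 : ∀ ℓ ∈ L, ∀ ℓ' ∈ L, ℓ ≠ ℓ' → ∃! p, p ∈ ℓ ∩ ℓ')
    (hP3 : ∃ p₁ p₂ p₃ p₄ : α, ({p₁, p₂, p₃, p₄} : Set α) ⊆ S ∧
      ({p₁, p₂, p₃, p₄} : Set α).encard = 4 ∧
      ∀ ℓ ∈ L, (({p₁, p₂, p₃, p₄} : Set α) ∩ ℓ).encard ≤ 2)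
    (horder : ∀ ℓ ∈ L, ℓ.encard = ((q + 1 : ℕ) : ℕ∞))
    (hcard : S.encard = ((q ^ 2 + q + 1 : ℕ) : ℕ∞))
    (M : Matroid α) (hE : M.E = S)
    (hInd : ∀ X, M.Indep X ↔ X ⊆ S ∧
      (X.encard ≤ 2 ∨ (X.encard = 3 ∧ ∀ ℓ ∈ L, ¬X ⊆ ℓ)))
    (N : Matroid α) (P : Set (Set α))
    (hN : N.IsPartitionMatroid P) (hred : N.Reduction M) :
    (Odd q → ∃ c ∈ P, (((q ^ 2 + q) / 2 : ℕ) : ℕ∞) ≤ c.encard) ∧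
    (Even q → ∃ c ∈ P, (((q ^ 2 + q + 2) / 2 : ℕ) : ℕ∞) ≤ c.encard) := by
  obtain ⟨hPU, hPdisj, hPind⟩ := hN
  obtain ⟨hNEM, hredI⟩ := hred
  have hNE : N.E = S := hNEM.trans hE
  have hSP : ⋃₀ P = S := hPU.trans hNE
  have hPsubS : ∀ c ∈ P, c ⊆ S := by
    intro c hc x hx
    rw [← hSP]
    exact ⟨c, hc, hx⟩
  suffices h : ∃ c ∈ P, q^2+q ≤ 2 * c.ncard ∧ (Even q → q^2+q+2 ≤ 2*c.ncard) by
    obtain ⟨c, hcP, h1, h2⟩ := h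
    have hcfin : c.Finite := hfin.subset (hPsubS c hcP)
    have henc : (c.ncard : ℕ∞) = c.encard := hcfin.cast_ncard_eq
    constructor
    · intro _
      exact ⟨c, hcP, by rw [← henc]; exact Nat.cast_le.mpr (by omega)⟩
    · intro he
      exact ⟨c, hcP, by rw [← henc]; exact Nat.cast_le.mpr (by have := h2 he; omega)⟩
  have huniq : ∀ c ∈ P, ∀ c' ∈ P, ∀ s, s ∈ c → s ∈ c' → c = c' := by
    intro c hc c' hc' s hs hs'
    by_contra hne
    exact Set.disjoint_left.mp (hPdisj c hc c' hc' hne) hs hs'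
  have hclass : ∀ s ∈ S, ∃ c ∈ P, s ∈ c := by
    intro s hs
    rw [← hSP] at hs
    obtain ⟨c, hc, hsc⟩ := hs
    exact ⟨c, hc, hsc⟩
  have hSn : S.ncard = q^2+q+1 := by rw [Set.ncard_def, hcard, ENat.toNat_coe]
  -- no line meets three distinct classes
  have nocol3 : ∀ ℓ ∈ L, ∀ cx ∈ P, ∀ cy ∈ P, ∀ cz ∈ P, cx ≠ cy → cx ≠ cz → cy ≠ cz →
      ∀ x ∈ ℓ ∩ cx, ∀ y ∈ ℓ ∩ cy, ∀ z ∈ ℓ ∩ cz, False := by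
    intro ℓ hℓ cx hcx cy hcy cz hcz hxy hxz hyz x hx y hy z hz
    have hxyne : x ≠ y := fun h => hxy (huniq cx hcx cy hcy x hx.2 (h ▸ hy.2))
    have hxzne : x ≠ z := fun h => hxz (huniq cx hcx cz hcz x hx.2 (h ▸ hz.2))
    have hyzne : y ≠ z := fun h => hyz (huniq cy hcy cz hcz y hy.2 (h ▸ hz.2))
    have hXl : ({x, y, z} : Set α) ⊆ ℓ := by
      rintro t (rfl | rfl | rfl)
      · exact hx.1
      · exact hy.1
      · exact hz.1
    have hXS : ({x, y, z} : Set α) ⊆ S := hXl.trans (hLS ℓ hℓ)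
    have hNind : N.Indep {x, y, z} := by
      rw [hPind]
      refine ⟨by rw [hNE]; exact hXS, ?_⟩
      intro c hc
      rw [Set.encard_le_one_iff]
      intro a b ha hb
      obtain ⟨haX, hac⟩ := ha
      obtain ⟨hbX, hbc⟩ := hb
      simp only [Set.mem_insert_iff, Set.mem_singleton_iff] at haX hbX
      rcases haX with rfl | rfl | rfl <;> rcases hbX with rfl | rfl | rfl
      · rfl
      · exact absurd ((huniq cx hcx c hc a hx.2 hac).trans
          (huniq c hc cy hcy b hbc hy.2)) hxy
      · exact absurd ((huniq cx hcx c hc a hx.2 hac).trans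
          (huniq c hc cz hcz b hbc hz.2)) hxz
      · exact absurd ((huniq cx hcx c hc b hx.2 hbc).trans
          (huniq c hc cy hcy a hac hy.2)) hxy
      · rfl
      · exact absurd ((huniq cy hcy c hc a hy.2 hac).trans
          (huniq c hc cz hcz b hbc hz.2)) hyz
      · exact absurd ((huniq cx hcx c hc b hx.2 hbc).trans
          (huniq c hc cz hcz a hac hz.2)) hxz
      · exact absurd ((huniq cy hcy c hc b hy.2 hbc).trans
          (huniq c hc cz hcz a hac hz.2)) hyz
      · rfl
    have hMind := hredI _ hNind
    rw [hInd] at hMind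
    obtain ⟨-, h2 | ⟨h3, hnl⟩⟩ := hMind
    · have h3 : ({x, y, z} : Set α).encard = 3 := by
        rw [Set.encard_insert_of_notMem (by simp [hxyne, hxzne]), Set.encard_pair hyzne]
        norm_num
      rw [h3] at h2
      norm_num at h2
    · exact hnl ℓ hℓ hXl
  -- a line meeting two classes is contained in their union
  have lineMiss : ∀ ℓ ∈ L, ∀ ca ∈ P, ∀ cb ∈ P, ca ≠ cb → (ℓ ∩ ca).Nonempty →
      (ℓ ∩ cb).Nonempty → ℓ ⊆ ca ∪ cb := by
    intro ℓ hℓ ca hca cb hcb hne hpa hpb t ht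
    obtain ⟨ct, hct, htc⟩ := hclass t (hLS ℓ hℓ ht)
    by_cases h1 : ct = ca
    · exact Or.inl (h1 ▸ htc)
    by_cases h2 : ct = cb
    · exact Or.inr (h2 ▸ htc)
    obtain ⟨xa, hxa⟩ := hpa
    obtain ⟨xb, hxb⟩ := hpb
    exact absurd (nocol3 ℓ hℓ ca hca cb hcb ct hct hne (fun h => h1 h.symm)
      (fun h => h2 h.symm) xa hxa xb hxb t ⟨ht, htc⟩) not_false
  by_cases hthree : ∃ A, A ∈ P ∧ ∃ B, B ∈ P ∧ ∃ C, C ∈ P ∧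
      A.Nonempty ∧ B.Nonempty ∧ C.Nonempty ∧ A ≠ B ∧ A ≠ C ∧ B ≠ C
  · -- exactly three nonempty classes: the counting argument
    obtain ⟨A, hA, B, hB, C, hC, ⟨y₀, hy₀⟩, ⟨z₀, hz₀⟩, ⟨x₀, hx₀⟩, hAB, hAC, hBC⟩ := hthree
    have hAS : A ⊆ S := hPsubS A hA
    have hBS : B ⊆ S := hPsubS B hB
    have hCS : C ⊆ S := hPsubS C hC
    have hy₀S : y₀ ∈ S := hAS hy₀
    have hz₀S : z₀ ∈ S := hBS hz₀
    have hx₀S : x₀ ∈ S := hCS hx₀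
    have hyz : y₀ ≠ z₀ := fun h => hAB (huniq A hA B hB y₀ hy₀ (h ▸ hz₀))
    have hyx : y₀ ≠ x₀ := fun h => hAC (huniq A hA C hC y₀ hy₀ (h ▸ hx₀))
    have hzx : z₀ ≠ x₀ := fun h => hBC (huniq B hB C hC z₀ hz₀ (h ▸ hx₀))
    have hy₀B : y₀ ∉ B := fun h => hAB (huniq A hA B hB y₀ hy₀ h)
    have hy₀C : y₀ ∉ C := fun h => hAC (huniq A hA C hC y₀ hy₀ h)
    have hz₀A : z₀ ∉ A := fun h => hAB (huniq A hA B hB z₀ h hz₀)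
    have hz₀C : z₀ ∉ C := fun h => hBC (huniq B hB C hC z₀ hz₀ h)
    have hx₀A : x₀ ∉ A := fun h => hAC (huniq A hA C hC x₀ h hx₀)
    have hx₀B : x₀ ∉ B := fun h => hBC (huniq B hB C hC x₀ h hx₀)
    obtain ⟨m, ⟨hmL, hym, hzm⟩, -⟩ := hP1 y₀ hy₀S z₀ hz₀S hyz
    obtain ⟨n, ⟨hnL, hyn, hxn⟩, -⟩ := hP1 y₀ hy₀S x₀ hx₀S hyx
    obtain ⟨r, ⟨hrL, hzr, hxr⟩, -⟩ := hP1 z₀ hz₀S x₀ hx₀S hzx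
    have hmAB : m ⊆ A ∪ B := lineMiss m hmL A hA B hB hAB ⟨y₀, hym, hy₀⟩ ⟨z₀, hzm, hz₀⟩
    have hnAC : n ⊆ A ∪ C := lineMiss n hnL A hA C hC hAC ⟨y₀, hyn, hy₀⟩ ⟨x₀, hxn, hx₀⟩
    have hrBC : r ⊆ B ∪ C := lineMiss r hrL B hB C hC hBC ⟨z₀, hzr, hz₀⟩ ⟨x₀, hxr, hx₀⟩
    have hx₀m : x₀ ∉ m := fun h => (hmAB h).elim hx₀A hx₀B
    have hz₀n : z₀ ∉ n := fun h => (hnAC h).elim hz₀A hz₀C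
    have hy₀r : y₀ ∉ r := fun h => (hrBC h).elim hy₀B hy₀C
    -- S is covered by A, B, C
    have hcover : S ⊆ A ∪ B ∪ C := by
      intro s hs
      obtain ⟨c, hc, hsc⟩ := hclass s hs
      by_cases h1 : c = A
      · exact Or.inl (Or.inl (h1 ▸ hsc))
      by_cases h2 : c = B
      · exact Or.inl (Or.inr (h2 ▸ hsc))
      by_cases h3 : c = C
      · exact Or.inr (h3 ▸ hsc)
      exfalso
      have hsx : s ≠ x₀ := fun h => h3 (huniq c hc C hC s hsc (h ▸ hx₀))
      obtain ⟨ℓ, ⟨hℓL, hsℓ, hxℓ⟩, -⟩ := hP1 s hs x₀ hx₀S hsx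
      have hℓcC : ℓ ⊆ c ∪ C := lineMiss ℓ hℓL c hc C hC h3 ⟨s, hsℓ, hsc⟩ ⟨x₀, hxℓ, hx₀⟩
      have hℓm : ℓ ≠ m := fun h => hx₀m (h ▸ hxℓ)
      obtain ⟨p, hp, -⟩ := hP2 ℓ hℓL m hmL hℓm
      rcases hℓcC hp.1 with hpc | hpC
      · rcases hmAB hp.2 with hpA | hpB
        · exact h1 (huniq c hc A hA p hpc hpA)
        · exact h2 (huniq c hc B hB p hpc hpB)
      · rcases hmAB hp.2 with hpA | hpB
        · exact hAC (huniq A hA C hC p hpA hpC)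
        · exact hBC (huniq B hB C hC p hpB hpC)
    have hcovEq : A ∪ B ∪ C = S :=
      Set.Subset.antisymm (Set.union_subset (Set.union_subset hAS hBS) hCS) hcover
    have hdAB : Disjoint A B := hPdisj A hA B hB hAB
    have hdAC : Disjoint A C := hPdisj A hA C hC hAC
    have hdBC : Disjoint B C := hPdisj B hB C hC hBC
    have hsplitS : A.ncard + B.ncard + C.ncard = q^2+q+1 := by
      rw [← hSn, ← hcovEq,
        Set.ncard_union_eq (Set.disjoint_union_left.mpr ⟨hdAC, hdBC⟩)
          ((hfin.subset hAS).union (hfin.subset hBS)) (hfin.subset hCS),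
        Set.ncard_union_eq hdAB (hfin.subset hAS) (hfin.subset hBS)]
    have hlcard : ∀ ℓ ∈ L, ℓ.ncard = q+1 := fun ℓ hℓ => by
      rw [Set.ncard_def, horder ℓ hℓ, ENat.toNat_coe]
    have split2 : ∀ ℓ ∈ L, ∀ X Y : Set α, Disjoint X Y → ℓ ⊆ X ∪ Y →
        (ℓ ∩ X).ncard + (ℓ ∩ Y).ncard = q+1 := by
      intro ℓ hℓ X Y hXY hsub
      have hfl : ℓ.Finite := hfin.subset (hLS ℓ hℓ)
      rw [← Set.ncard_union_eq (hXY.mono Set.inter_subset_right Set.inter_subset_right)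
        (hfl.subset Set.inter_subset_left) (hfl.subset Set.inter_subset_left)]
      rw [← Set.inter_union_distrib_left, Set.inter_eq_left.mpr hsub]
      exact hlcard ℓ hℓ
    -- constancy of traces
    have lemAC : ∀ ℓ ∈ L, (ℓ ∩ A).Nonempty → (ℓ ∩ C).Nonempty →
        (ℓ ∩ A).ncard = (n ∩ A).ncard := by
      intro ℓ hℓ hAne hCne
      have hℓAC : ℓ ⊆ A ∪ C := lineMiss ℓ hℓ A hA C hC hAC hAne hCne
      have hz₀ℓ : z₀ ∉ ℓ := fun h => (hℓAC h).elim hz₀A hz₀C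
      have crossA : ∀ t, t ⊆ A ∪ C → ∀ ℓ' ∈ L, z₀ ∈ ℓ' → (ℓ' ∩ A).Nonempty →
          ℓ' ∩ t ⊆ A := by
        intro t ht ℓ' hℓ' hzℓ' hAne' p hp
        have hℓ'BA : ℓ' ⊆ B ∪ A :=
          lineMiss ℓ' hℓ' B hB A hA (fun h => hAB h.symm) ⟨z₀, hzℓ', hz₀⟩ hAne'
        rcases hℓ'BA hp.1 with hpB | hpA
        · rcases ht hp.2 with hpA | hpC
          · exact absurd (huniq A hA B hB p hpA hpB) hAB
          · exact absurd (huniq B hB C hC p hpB hpC) hBC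
        · exact hpA
      apply le_antisymm
      · exact proj_le hLS hP1 hP2 hℓ hnL hz₀S hz₀ℓ hz₀n hAS hz₀A
          (hfin.subset (fun t ht => hAS ht.2))
          (fun ℓ' hℓ' hz hne => crossA n hnAC ℓ' hℓ' hz
            (hne.imp (fun w hw => ⟨hw.1.1, hw.2⟩)))
      · exact proj_le hLS hP1 hP2 hnL hℓ hz₀S hz₀n hz₀ℓ hAS hz₀A
          (hfin.subset (fun t ht => hAS ht.2))
          (fun ℓ' hℓ' hz hne => crossA ℓ hℓAC ℓ' hℓ' hz
            (hne.imp (fun w hw => ⟨hw.1.1, hw.2⟩)))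
    have lemBC : ∀ ℓ ∈ L, (ℓ ∩ B).Nonempty → (ℓ ∩ C).Nonempty →
        (ℓ ∩ B).ncard = (r ∩ B).ncard := by
      intro ℓ hℓ hBne hCne
      have hℓBC : ℓ ⊆ B ∪ C := lineMiss ℓ hℓ B hB C hC hBC hBne hCne
      have hy₀ℓ : y₀ ∉ ℓ := fun h => (hℓBC h).elim hy₀B hy₀C
      have crossB : ∀ t, t ⊆ B ∪ C → ∀ ℓ' ∈ L, y₀ ∈ ℓ' → (ℓ' ∩ B).Nonempty →
          ℓ' ∩ t ⊆ B := by
        intro t ht ℓ' hℓ' hyℓ' hBne' p hp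
        have hℓ'AB : ℓ' ⊆ A ∪ B :=
          lineMiss ℓ' hℓ' A hA B hB hAB ⟨y₀, hyℓ', hy₀⟩ hBne'
        rcases hℓ'AB hp.1 with hpA | hpB
        · rcases ht hp.2 with hpB | hpC
          · exact absurd (huniq A hA B hB p hpA hpB) hAB
          · exact absurd (huniq A hA C hC p hpA hpC) hAC
        · exact hpB
      apply le_antisymm
      · exact proj_le hLS hP1 hP2 hℓ hrL hy₀S hy₀ℓ hy₀r hBS hy₀B
          (hfin.subset (fun t ht => hBS ht.2))
          (fun ℓ' hℓ' hz hne => crossB r hrBC ℓ' hℓ' hz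
            (hne.imp (fun w hw => ⟨hw.1.1, hw.2⟩)))
      · exact proj_le hLS hP1 hP2 hrL hℓ hy₀S hy₀r hy₀ℓ hBS hy₀B
          (hfin.subset (fun t ht => hBS ht.2))
          (fun ℓ' hℓ' hz hne => crossB ℓ hℓBC ℓ' hℓ' hz
            (hne.imp (fun w hw => ⟨hw.1.1, hw.2⟩)))
    -- the three pencil counts
    have haA : A.ncard = (m ∩ A).ncard * (n ∩ A).ncard := by
      apply pencil_count hLS hP1 hP2 hfin hmL hx₀S hx₀m hAS hx₀A
      intro ℓ hℓ hxℓ hAne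
      have hℓCA : ℓ ⊆ C ∪ A :=
        lineMiss ℓ hℓ C hC A hA (fun h => hAC h.symm) ⟨x₀, hxℓ, hx₀⟩ hAne
      constructor
      · intro p hp
        rcases hℓCA hp.1 with hpC | hpA
        · rcases hmAB hp.2 with hpA | hpB
          · exact absurd (huniq A hA C hC p hpA hpC) hAC
          · exact absurd (huniq B hB C hC p hpB hpC) hBC
        · exact hpA
      · exact lemAC ℓ hℓ hAne ⟨x₀, hxℓ, hx₀⟩
    have hbB : B.ncard = (m ∩ B).ncard * (r ∩ B).ncard := by
      apply pencil_count hLS hP1 hP2 hfin hmL hx₀S hx₀m hBS hx₀B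
      intro ℓ hℓ hxℓ hBne
      have hℓCB : ℓ ⊆ C ∪ B :=
        lineMiss ℓ hℓ C hC B hB (fun h => hBC h.symm) ⟨x₀, hxℓ, hx₀⟩ hBne
      constructor
      · intro p hp
        rcases hℓCB hp.1 with hpC | hpB
        · rcases hmAB hp.2 with hpA | hpB
          · exact absurd (huniq A hA C hC p hpA hpC) hAC
          · exact absurd (huniq B hB C hC p hpB hpC) hBC
        · exact hpB
      · exact lemBC ℓ hℓ hBne ⟨x₀, hxℓ, hx₀⟩
    have hcC : C.ncard = (r ∩ C).ncard * (n ∩ C).ncard := by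
      apply pencil_count hLS hP1 hP2 hfin hrL hy₀S hy₀r hCS hy₀C
      intro ℓ hℓ hyℓ hCne
      have hℓAC' : ℓ ⊆ A ∪ C :=
        lineMiss ℓ hℓ A hA C hC hAC ⟨y₀, hyℓ, hy₀⟩ hCne
      constructor
      · intro p hp
        rcases hℓAC' hp.1 with hpA | hpC
        · rcases hrBC hp.2 with hpB | hpC
          · exact absurd (huniq A hA B hB p hpA hpB) hAB
          · exact absurd (huniq A hA C hC p hpA hpC) hAC
        · exact hpC
      · have e1 : (ℓ ∩ A).ncard = (n ∩ A).ncard := lemAC ℓ hℓ ⟨y₀, hyℓ, hy₀⟩ hCne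
        have e2 : (ℓ ∩ A).ncard + (ℓ ∩ C).ncard = q+1 := split2 ℓ hℓ A C hdAC hℓAC'
        have e3 : (n ∩ A).ncard + (n ∩ C).ncard = q+1 := split2 n hnL A C hdAC hnAC
        omega
    -- the six parameters
    have hsm : (m ∩ A).ncard + (m ∩ B).ncard = q+1 := split2 m hmL A B hdAB hmAB
    have hsn : (n ∩ A).ncard + (n ∩ C).ncard = q+1 := split2 n hnL A C hdAC hnAC
    have hsr : (r ∩ B).ncard + (r ∩ C).ncard = q+1 := split2 r hrL B C hdBC hrBC
    have hmA1 : 1 ≤ (m ∩ A).ncard :=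
      (Set.ncard_pos (hfin.subset (fun t ht => hAS ht.2))).mpr ⟨y₀, hym, hy₀⟩
    have hmB1 : 1 ≤ (m ∩ B).ncard :=
      (Set.ncard_pos (hfin.subset (fun t ht => hBS ht.2))).mpr ⟨z₀, hzm, hz₀⟩
    have hnA1 : 1 ≤ (n ∩ A).ncard :=
      (Set.ncard_pos (hfin.subset (fun t ht => hAS ht.2))).mpr ⟨y₀, hyn, hy₀⟩
    have hnC1 : 1 ≤ (n ∩ C).ncard :=
      (Set.ncard_pos (hfin.subset (fun t ht => hCS ht.2))).mpr ⟨x₀, hxn, hx₀⟩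
    have hrB1 : 1 ≤ (r ∩ B).ncard :=
      (Set.ncard_pos (hfin.subset (fun t ht => hBS ht.2))).mpr ⟨z₀, hzr, hz₀⟩
    have hrC1 : 1 ≤ (r ∩ C).ncard :=
      (Set.ncard_pos (hfin.subset (fun t ht => hCS ht.2))).mpr ⟨x₀, hxr, hx₀⟩
    have hq1 : 1 ≤ q := by omega
    have hsum : (m ∩ A).ncard * (n ∩ A).ncard + (m ∩ B).ncard * (r ∩ B).ncard +
        (r ∩ C).ncard * (n ∩ C).ncard = q^2+q+1 := by
      rw [← haA, ← hbB, ← hcC]; exact hsplitS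
    rcases pp_arith q ((m ∩ A).ncard) ((m ∩ B).ncard) ((r ∩ B).ncard) ((r ∩ C).ncard)
      ((n ∩ A).ncard) ((n ∩ C).ncard) hq1 hmA1 hmB1 hrB1 hrC1 hnA1 hnC1
      hsm hsr hsn hsum with h | h | h
    · exact ⟨A, hA, by rw [haA]; exact h⟩
    · exact ⟨B, hB, by rw [hbB]; exact h⟩
    · exact ⟨C, hC, by rw [hcC]; exact h⟩
  · -- at most two nonempty classes
    have hSne : S.Nonempty := by
      rw [← Set.encard_ne_zero, hcard]
      simp
    obtain ⟨s₀, hs₀⟩ := hSne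
    obtain ⟨A, hA, hs₀A⟩ := hclass s₀ hs₀
    push_neg at hthree
    by_cases hBex : ∃ B ∈ P, B.Nonempty ∧ B ≠ A
    · obtain ⟨B, hB, hBne, hBA⟩ := hBex
      have hcover : S ⊆ A ∪ B := by
        intro s hs
        obtain ⟨c, hc, hsc⟩ := hclass s hs
        by_cases h1 : c = A
        · exact Or.inl (h1 ▸ hsc)
        by_cases h2 : c = B
        · exact Or.inr (h2 ▸ hsc)
        exact absurd (hthree A hA B hB c hc ⟨s₀, hs₀A⟩ hBne ⟨s, hsc⟩
          (fun h => hBA h.symm) (fun h => h1 h.symm)).symm h2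
      have hABfin : (A ∪ B).Finite :=
        (hfin.subset (hPsubS A hA)).union (hfin.subset (hPsubS B hB))
      have hle : q^2+q+1 ≤ A.ncard + B.ncard := by
        calc q^2+q+1 = S.ncard := hSn.symm
        _ ≤ (A ∪ B).ncard := Set.ncard_le_ncard hcover hABfin
        _ ≤ A.ncard + B.ncard := Set.ncard_union_le A B
      have hpar : ∃ k, q^2+q = k+k := by
        obtain ⟨k, hk⟩ := Nat.even_mul_succ_self q
        exact ⟨k, by rw [← hk]; ring⟩
      obtain ⟨k, hk⟩ := hpar
      rcases le_total A.ncard B.ncard with hab | hab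
      · exact ⟨B, hB, by omega, fun _ => by omega⟩
      · exact ⟨A, hA, by omega, fun _ => by omega⟩
    · push_neg at hBex
      have hcover : S ⊆ A := by
        intro s hs
        obtain ⟨c, hc, hsc⟩ := hclass s hs
        rw [← hBex c hc ⟨s, hsc⟩]
        exact hsc
      have hle : q^2+q+1 ≤ A.ncard := by
        rw [← hSn]
        exact Set.ncard_le_ncard hcover (hfin.subset (hPsubS A hA))
      exact ⟨A, hA, by omega, fun _ => by omega⟩
end

section
/- Let k ≥ 2, let S be a set of size k²−k partitioned as S = S_1 ∪ … ∪ S_k into classes of size k−1 each, and let M = (S, I) be the matroid in which X ⊆ S is independent if and only if |X ∩ S_i| ≤ 1 for i = 1,…,k and |X| ≤ k−1. Then M is a k-colorable matroid of rank k−1, and every partition matroid N with N ⪯ M satisfies χ(N) ≥ 2k−2. -/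
open Set

variable {α : Type*}

private lemma encard_range_fin {β : Type*} {m : ℕ} (f : Fin m → β)
    (hf : Function.Injective f) : (Set.range f).encard = m := by
  rw [← Set.image_univ, hf.encard_image, Set.encard_univ]
  simp [ENat.card_eq_coe_fintype_card]

/-- The laminar matroid on a set `S` of size `k² - k` partitioned into `k` classes of size
`k - 1`, whose independent sets are the sets of size at most `k - 1` meeting every class
at most once, is a `k`-colorable matroid of rank `k - 1`, and every partition matroid
`N ⪯ M` has a class of size at least `2k - 2`. -/
theorem statement_17 (k : ℕ) (hk : 2 ≤ k) (S : Set α) (S' : Fin k → Set α)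
    (hdisj : Pairwise fun i j => Disjoint (S' i) (S' j))
    (hunion : (⋃ i, S' i) = S)
    (hcard : ∀ i, (S' i).encard = ((k - 1 : ℕ) : ℕ∞))
    (M : Matroid α) (hE : M.E = S)
    (hInd : ∀ X, M.Indep X ↔ X ⊆ S ∧ X.encard ≤ ((k - 1 : ℕ) : ℕ∞) ∧
      ∀ i, (X ∩ S' i).encard ≤ 1) :
    M.IsColorable k ∧ M.rkE = ((k - 1 : ℕ) : ℕ∞) ∧
      ∀ (N : Matroid α) (P : Set (Set α)), N.IsPartitionMatroid P → N.Reduction M →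
        ∃ c ∈ P, ((2 * k - 2 : ℕ) : ℕ∞) ≤ c.encard := by
  obtain ⟨n, rfl⟩ : ∃ n, k = n + 1 := ⟨k - 1, by omega⟩
  have hn : 0 < n := by omega
  have h2k : (2 * (n + 1) : ℕ) - 2 = 2 * n := by omega
  simp only [Nat.add_sub_cancel] at hcard hInd ⊢
  rw [h2k]
  -- basic facts
  have hSsub : ∀ i, S' i ⊆ S := fun i => hunion ▸ subset_iUnion S' i
  have hclass : ∀ i j x, x ∈ S' i → x ∈ S' j → i = j := by
    intro i j x hi hj
    by_contra h
    exact absurd hj (disjoint_left.mp (hdisj h) hi)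
  -- enumerations of the classes
  have henum : ∀ i, ∃ f : Fin n → α, Function.Injective f ∧ Set.range f = S' i := by
    intro i
    have hfin : (S' i).Finite := finite_of_encard_eq_coe (hcard i)
    have hc : hfin.toFinset.card = n := by
      have h1 := hfin.encard_eq_coe_toFinset_card
      rw [hcard i] at h1
      exact_mod_cast h1.symm
    let f0 : Fin n ≃ hfin.toFinset := (hfin.toFinset.equivFin.trans (finCongr hc)).symm
    refine ⟨fun t => (f0 t : α), fun a b hab => f0.injective (Subtype.ext hab), ?_⟩
    ext x
    constructor
    · rintro ⟨t, rfl⟩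
      exact hfin.mem_toFinset.mp (f0 t).2
    · intro hx
      exact ⟨f0.symm ⟨x, hfin.mem_toFinset.mpr hx⟩, by simp⟩
  choose e heinj herange using henum
  have heS : ∀ i t, e i t ∈ S' i := fun i t => (herange i) ▸ mem_range_self t
  set c0 : Fin n := ⟨0, hn⟩ with hc0
  -- the coloring
  set I : Fin (n + 1) → Set α := fun j => ⋃ i, e i '' {t | i.succAbove t = j} with hI
  have hmemI : ∀ j x, x ∈ I j ↔ ∃ i t, i.succAbove t = j ∧ e i t = x := by
    intro j x
    simp only [hI, mem_iUnion, mem_image, mem_setOf_eq]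
  have hIsub : ∀ j, I j ⊆ S := by
    rintro j x hx
    obtain ⟨i, t, -, rfl⟩ := (hmemI j x).mp hx
    exact hSsub i (heS i t)
  have hIint : ∀ j i, (I j ∩ S' i).encard ≤ 1 := by
    intro j i
    rw [encard_le_one_iff]
    rintro a b ⟨ha, haS⟩ ⟨hb, hbS⟩
    obtain ⟨i1, t1, h1, rfl⟩ := (hmemI j a).mp ha
    obtain ⟨i2, t2, h2, rfl⟩ := (hmemI j b).mp hb
    have e1 : i1 = i := hclass i1 i _ (heS i1 t1) haS
    have e2 : i2 = i := hclass i2 i _ (heS i2 t2) hbS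
    obtain rfl : i1 = i2 := e1.trans e2.symm
    obtain rfl : t1 = t2 := Fin.succAbove_right_injective (h1.trans h2.symm)
    rfl
  have hIcard : ∀ j, (I j).encard ≤ (n : ℕ∞) := by
    intro j
    have hsub : I j ⊆ (fun i : Fin (n + 1) =>
        if h : ∃ t, i.succAbove t = j then e i h.choose else e i c0) '' {j}ᶜ := by
      intro x hx
      obtain ⟨i, t, ht, rfl⟩ := (hmemI j x).mp hx
      have hij : i ≠ j := fun h => Fin.succAbove_ne i t (ht.trans h.symm)
      refine ⟨i, hij, ?_⟩
      have hex : ∃ t', i.succAbove t' = j := ⟨t, ht⟩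
      have : hex.choose = t := Fin.succAbove_right_injective (hex.choose_spec.trans ht.symm)
      simp [hex, this]
    calc (I j).encard ≤ _ := encard_mono hsub
      _ ≤ ({j}ᶜ : Set (Fin (n + 1))).encard := encard_image_le _ _
      _ = (n : ℕ∞) := by
          rw [← Fin.range_succAbove j]
          exact encard_range_fin _ Fin.succAbove_right_injective
  have hIindep : ∀ j, M.Indep (I j) :=
    fun j => (hInd _).mpr ⟨hIsub j, hIcard j, hIint j⟩
  have hIunion : (⋃ j, I j) = M.E := by
    rw [hE]
    apply subset_antisymm (iUnion_subset hIsub)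
    intro x hx
    rw [← hunion] at hx
    obtain ⟨i, hi⟩ := mem_iUnion.mp hx
    rw [← herange i] at hi
    obtain ⟨t, rfl⟩ := hi
    exact mem_iUnion.mpr ⟨i.succAbove t, (hmemI _ _).mpr ⟨i, t, rfl, rfl⟩⟩
  have hIdisj : Pairwise fun j j' => Disjoint (I j) (I j') := by
    intro j j' hjj'
    rw [disjoint_left]
    rintro x hx hx'
    obtain ⟨i, t, ht, rfl⟩ := (hmemI j x).mp hx
    obtain ⟨i', t', ht', hx'⟩ := (hmemI j' _).mp hx'
    have e1 : i' = i := hclass i' i _ (heS i' t') (by rw [hx']; exact heS i t)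
    subst e1
    obtain rfl : t' = t := heinj i' hx'
    exact hjj' (ht ▸ ht')
  refine ⟨⟨I, hIindep, hIunion, hIdisj⟩, ?_, ?_⟩
  · -- rank
    rw [Matroid.rkE]
    apply le_antisymm
    · exact iSup₂_le fun X hX => ((hInd X).mp hX).2.1
    · have hTinj : Function.Injective (fun t : Fin n => e t.succ c0) := by
        intro a b hab
        have hab' : e a.succ c0 = e b.succ c0 := hab
        exact Fin.succ_injective n (hclass _ _ _ (heS a.succ c0)
          (by rw [hab']; exact heS b.succ c0))
      have hTind : M.Indep (Set.range fun t : Fin n => e t.succ c0) := by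
        rw [hInd]
        refine ⟨?_, (encard_range_fin _ hTinj).le, ?_⟩
        · rintro x ⟨t, rfl⟩
          exact hSsub _ (heS t.succ c0)
        · intro i
          rw [encard_le_one_iff]
          rintro a b ⟨⟨t, rfl⟩, haS⟩ ⟨⟨t', rfl⟩, hbS⟩
          obtain rfl : t.succ = i := hclass _ _ _ (heS t.succ c0) haS
          obtain rfl : t' = t := Fin.succ_injective n (hclass _ _ _ (heS t'.succ c0) hbS)
          rfl
      calc (n : ℕ∞) = (Set.range fun t : Fin n => e t.succ c0).encard :=
            (encard_range_fin _ hTinj).symm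
        _ ≤ _ := le_biSup _ hTind
  · -- partition matroid reductions
    rintro N P ⟨hPU, hPdisj, hPind⟩ ⟨hNE, hNM⟩
    have hNS : N.E = S := hNE.trans hE
    have hxclass : ∀ x ∈ S, ∃ cc ∈ P, x ∈ cc := by
      intro x hx
      have : x ∈ ⋃₀ P := by rw [hPU, hNS]; exact hx
      exact this
    have hconeclass : ∀ cc ∈ P, ∀ cc' ∈ P, ∀ x, x ∈ cc → x ∈ cc' → cc = cc' := by
      intro cc hcc cc' hcc' x hx hx'
      by_contra h
      exact absurd hx' (disjoint_left.mp (hPdisj cc hcc cc' hcc' h) hx)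
    have claim1 : ∀ i (x y : α), x ∈ S' i → y ∈ S' i → x ≠ y →
        ∀ cc ∈ P, x ∈ cc → y ∈ cc := by
      intro i x y hx hy hxy cc hcc hxcc
      obtain ⟨cc', hcc', hycc'⟩ := hxclass y (hSsub i hy)
      by_contra hycc
      have hne : cc ≠ cc' := fun h => hycc (h ▸ hycc')
      have hNind : N.Indep {x, y} := by
        rw [hPind]
        constructor
        · rw [hNS]
          exact insert_subset (hSsub i hx) (singleton_subset_iff.mpr (hSsub i hy))
        · intro cc'' hcc''
          rw [encard_le_one_iff]
          rintro a b ⟨rfl | rfl, hacc⟩ ⟨rfl | rfl, hbcc⟩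
          · rfl
          · exact absurd ((hconeclass cc hcc cc'' hcc'' a hxcc hacc).trans
              (hconeclass cc'' hcc'' cc' hcc' b hbcc hycc')) hne
          · exact absurd ((hconeclass cc hcc cc'' hcc'' b hxcc hbcc).trans
              (hconeclass cc'' hcc'' cc' hcc' a hacc hycc')) hne
          · rfl
      have hMind := (hInd _).mp (hNM _ hNind)
      have h2 := hMind.2.2 i
      have : ({x, y} : Set α) ∩ S' i = {x, y} :=
        inter_eq_left.mpr (insert_subset hx (singleton_subset_iff.mpr hy))
      rw [this, encard_pair hxy] at h2
      exact absurd h2 (by norm_num)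
    have claim2 : ∀ i, ∃ cc ∈ P, S' i ⊆ cc := by
      intro i
      obtain ⟨cc, hcc, hxcc⟩ := hxclass (e i c0) (hSsub i (heS i c0))
      refine ⟨cc, hcc, fun y hy => ?_⟩
      by_cases hxy : y = e i c0
      · exact hxy ▸ hxcc
      · exact claim1 i (e i c0) y (heS i c0) hy (Ne.symm hxy) cc hcc hxcc
    choose c hcP hcS using claim2
    by_cases hcinj : Function.Injective c
    · exfalso
      have hTinj : Function.Injective (fun i : Fin (n + 1) => e i c0) := by
        intro a b hab
        have hab' : e a c0 = e b c0 := hab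
        exact hclass a b _ (heS a c0) (by rw [hab']; exact heS b c0)
      have hTN : N.Indep (Set.range fun i : Fin (n + 1) => e i c0) := by
        rw [hPind]
        constructor
        · rintro x ⟨i, rfl⟩
          rw [hNS]; exact hSsub i (heS i c0)
        · intro cc hcc
          rw [encard_le_one_iff]
          rintro a b ⟨⟨i, rfl⟩, hacc⟩ ⟨⟨i', rfl⟩, hbcc⟩
          have h1 : cc = c i := hconeclass cc hcc (c i) (hcP i) _ hacc (hcS i (heS i c0))
          have h2 : cc = c i' := hconeclass cc hcc (c i') (hcP i') _ hbcc (hcS i' (heS i' c0))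
          obtain rfl : i = i' := hcinj (h1.symm.trans h2)
          rfl
      have hle := ((hInd _).mp (hNM _ hTN)).2.1
      rw [encard_range_fin _ hTinj] at hle
      exact absurd hle (by exact_mod_cast Nat.not_succ_le_self n)
    · rw [Function.not_injective_iff] at hcinj
      obtain ⟨i, i', hceq, hne⟩ := hcinj
      refine ⟨c i, hcP i, ?_⟩
      have hsub : S' i ∪ S' i' ⊆ c i := union_subset (hcS i) (hceq ▸ hcS i')
      calc ((2 * n : ℕ) : ℕ∞) = (S' i ∪ S' i').encard := by
            rw [encard_union_eq (hdisj hne), hcard, hcard]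
            push_cast; ring
        _ ≤ (c i).encard := encard_mono hsub
end

section
/- Let G = (A, B; E) be a bipartite graph, S ⊆ A, and k ≥ 1 an integer. Suppose G contains k matchings, each of size |B|, such that every vertex in S is covered by at most k−1 of them. Then for every X ⊆ A, k·(|A|−|B|) − |S \ X| ≥ k·max{|Y|−|N(Y)| : Y ⊆ X}, where N(Y) denotes the set of neighbors in B of the vertex set Y ⊆ A. -/
open Set

variable {α : Type*}

/-- If a bipartite graph (edge relation `R` between finite vertex types `A` and `B`)
contains `k` matchings of size `|B|` (i.e. injections `B → A` along edges) such that each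
vertex of `S ⊆ A` is covered by at most `k - 1` of them, then for every `X ⊆ A` and every
`Y ⊆ X` we have `k·(|Y| - |N(Y)|) ≤ k·(|A| - |B|) - |S \ X|`. -/
theorem statement_18 {A B : Type*} [Fintype A] [Fintype B] (R : A → B → Prop) (S : Set A)
    (k : ℕ) (hk : 1 ≤ k) (f : Fin k → B → A)
    (hinj : ∀ i, Function.Injective (f i))
    (hedge : ∀ i b, R (f i b) b)
    (hcov : ∀ s ∈ S, ({i : Fin k | ∃ b, f i b = s}).ncard ≤ k - 1) :
    ∀ X : Set A, ∀ Y ⊆ X,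
      (k : ℤ) * ((Y.ncard : ℤ) - ({b : B | ∃ a ∈ Y, R a b}).ncard) ≤
        (k : ℤ) * ((Fintype.card A : ℤ) - (Fintype.card B : ℤ)) - (S \ X).ncard := by
  classical
  intro X Y hYX
  set N := {b : B | ∃ a ∈ Y, R a b} with hN
  set miss : Fin k → Set A := fun i => (Set.range (f i))ᶜ with hmiss
  have hrange : ∀ i, (Set.range (f i)).ncard = Fintype.card B := by
    intro i
    rw [← Set.image_univ, Set.ncard_image_of_injective _ (hinj i),
      Set.ncard_univ, Nat.card_eq_fintype_card]
  have hmisscard : ∀ i, (miss i).ncard + Fintype.card B = Fintype.card A := by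
    intro i
    have := Set.ncard_add_ncard_compl (Set.range (f i))
    rw [hrange i, Nat.card_eq_fintype_card] at this
    simp only [hmiss]
    omega
  have h1 : ∀ i, Y.ncard ≤ N.ncard + (Y ∩ miss i).ncard := by
    intro i
    have hsplit : Y.ncard = (Y ∩ Set.range (f i)).ncard + (Y ∩ miss i).ncard := by
      rw [← Set.ncard_union_eq ?_ (Set.toFinite _) (Set.toFinite _)]
      · congr 1
        rw [← Set.inter_union_distrib_left, Set.union_compl_self, Set.inter_univ]
      · exact Set.disjoint_of_subset Set.inter_subset_right Set.inter_subset_right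
          disjoint_compl_right
    have himg : (Y ∩ Set.range (f i)).ncard ≤ N.ncard := by
      have heq : Y ∩ Set.range (f i) = f i '' (f i ⁻¹' Y) :=
        (Set.image_preimage_eq_inter_range (f := f i) (t := Y)).symm
      rw [heq]
      calc (f i '' (f i ⁻¹' Y)).ncard ≤ (f i ⁻¹' Y).ncard :=
            Set.ncard_image_le (Set.toFinite _)
        _ ≤ N.ncard := Set.ncard_le_ncard (fun b hb => ⟨f i b, hb, hedge i b⟩)
            (Set.toFinite _)
    omega
  have h2 : ∀ i, (Y ∩ miss i).ncard + ((S \ X) ∩ miss i).ncard + Fintype.card B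
      ≤ Fintype.card A := by
    intro i
    have hdisj : Disjoint (Y ∩ miss i) ((S \ X) ∩ miss i) := by
      apply Set.disjoint_of_subset Set.inter_subset_left Set.inter_subset_left
      exact Set.disjoint_left.mpr fun a ha hsa => hsa.2 (hYX ha)
    have hsub : (Y ∩ miss i) ∪ ((S \ X) ∩ miss i) ⊆ miss i :=
      Set.union_subset Set.inter_subset_right Set.inter_subset_right
    have hu := Set.ncard_union_eq hdisj (Set.toFinite _) (Set.toFinite _)
    have hle : ((Y ∩ miss i) ∪ ((S \ X) ∩ miss i)).ncard ≤ (miss i).ncard :=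
      Set.ncard_le_ncard hsub (Set.toFinite _)
    have := hmisscard i
    omega
  have h3 : ∀ s ∈ S \ X, ∃ i, s ∈ miss i := by
    intro s hs
    by_contra h
    push_neg at h
    have huniv : {i : Fin k | ∃ b, f i b = s} = Set.univ := by
      ext i
      simp only [Set.mem_setOf_eq, Set.mem_univ, iff_true]
      have := h i
      simp only [hmiss, Set.mem_compl_iff, Set.mem_range, not_not] at this
      exact this
    have hcard := hcov s hs.1
    rw [huniv, Set.ncard_univ, Nat.card_eq_fintype_card, Fintype.card_fin] at hcard
    omega
  set D : Finset A := (S \ X).toFinite.toFinset with hD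
  have hDcard : D.card = (S \ X).ncard := (Set.ncard_eq_toFinset_card _ _).symm
  have hfilter : ∀ i, ((S \ X) ∩ miss i).ncard = (D.filter (· ∈ miss i)).card := by
    intro i
    rw [← Set.ncard_coe_finset]
    congr 1
    ext a
    simp only [Finset.coe_filter, Set.mem_setOf_eq, hD, Set.Finite.mem_toFinset,
      Set.mem_inter_iff]
  have hswap : ∑ i : Fin k, (D.filter (· ∈ miss i)).card
      = ∑ s ∈ D, (Finset.univ.filter (fun i : Fin k => s ∈ miss i)).card := by
    simp only [Finset.card_filter]
    rw [Finset.sum_comm]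
  have hC : (S \ X).ncard ≤ ∑ i : Fin k, ((S \ X) ∩ miss i).ncard := by
    calc (S \ X).ncard = D.card := hDcard.symm
      _ = ∑ _s ∈ D, 1 := by simp
      _ ≤ ∑ s ∈ D, (Finset.univ.filter (fun i : Fin k => s ∈ miss i)).card := by
          apply Finset.sum_le_sum
          intro s hs
          obtain ⟨i, hi⟩ := h3 s ((S \ X).toFinite.mem_toFinset.mp hs)
          exact Finset.card_pos.mpr ⟨i, Finset.mem_filter.mpr ⟨Finset.mem_univ i, hi⟩⟩
      _ = ∑ i : Fin k, (D.filter (· ∈ miss i)).card := hswap.symm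
      _ = ∑ i : Fin k, ((S \ X) ∩ miss i).ncard := by simp [hfilter]
  have H1 : k * Y.ncard ≤ k * N.ncard + ∑ i : Fin k, (Y ∩ miss i).ncard := by
    have := Finset.sum_le_sum (fun i (_ : i ∈ Finset.univ) => h1 i)
    simpa [Finset.sum_add_distrib, Finset.sum_const, Finset.card_univ, mul_comm] using this
  have H2 : (∑ i : Fin k, (Y ∩ miss i).ncard) + (∑ i : Fin k, ((S \ X) ∩ miss i).ncard)
      + k * Fintype.card B ≤ k * Fintype.card A := by
    have := Finset.sum_le_sum (fun i (_ : i ∈ Finset.univ) => h2 i)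
    simpa [Finset.sum_add_distrib, Finset.sum_const, Finset.card_univ, mul_comm] using this
  have key : k * Y.ncard + (S \ X).ncard + k * Fintype.card B
      ≤ k * N.ncard + k * Fintype.card A := by
    have := H1; have := H2; have := hC
    set u := ∑ i : Fin k, (Y ∩ miss i).ncard
    set v := ∑ i : Fin k, ((S \ X) ∩ miss i).ncard
    set a1 := k * Y.ncard; set a2 := k * N.ncard
    set a3 := k * Fintype.card B; set a4 := k * Fintype.card A
    omega
  have keyZ : (k : ℤ) * Y.ncard + (S \ X).ncard + k * Fintype.card B
      ≤ k * N.ncard + k * Fintype.card A := by exact_mod_cast key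
  linarith [keyZ]
end
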